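/- arXiv:2512.10857 — 5 statements merged into one kernel-verified Lean document; each statement's English description precedes it below -/
import Mathlib

section
/- Let d ≥ 1, let Σ and Σ₀ be real symmetric positive definite d×d matrices, let ε ≥ 0, set η = min(λ_min(Σ), λ_min(Σ₀)) > 0, and define Σ_k and B_k = (Σ_k (Σ_k + I)^{-1})^{(1+ε)/2} recursively by Σ_{k+1} = Σ_k + B_k (Σ − Σ_k) B_k. Let b, b₀ ∈ ℝ^d and define the vector sequence b_{k+1} = b_k + B_k (b − b_k). Then for every k ≥ 0, ‖b − b_k‖² ≤ (1 − η^{1+ε} (1+η)^{−(1+ε)})^k ‖b − b₀‖², where ‖·‖ is the Euclidean norm on ℝ^d. -/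
open Matrix

/-- Matrix power via the spectral functional calculus: for a real symmetric matrix `A`,
apply `x ↦ x ^ r` to the eigenvalues of `A` (junk value `0` if `A` is not symmetric). -/
noncomputable def matPow {d : ℕ} (A : Matrix (Fin d) (Fin d) ℝ) (r : ℝ) :
    Matrix (Fin d) (Fin d) ℝ :=
  if hA : A.IsHermitian then
    (hA.eigenvectorUnitary : Matrix (Fin d) (Fin d) ℝ) *
      Matrix.diagonal (fun i => hA.eigenvalues i ^ r) *
      star (hA.eigenvectorUnitary : Matrix (Fin d) (Fin d) ℝ)
  else 0

/-- Smallest eigenvalue of a real symmetric matrix (junk value `0` otherwise). -/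
noncomputable def lamMin {d : ℕ} (A : Matrix (Fin d) (Fin d) ℝ) : ℝ :=
  if hA : A.IsHermitian then ⨅ i, hA.eigenvalues i else 0

section Helpers

variable {d : ℕ}

/-- Conjugation of a diagonal matrix by `U`. -/
def conjD (U : Matrix (Fin d) (Fin d) ℝ) (f : Fin d → ℝ) : Matrix (Fin d) (Fin d) ℝ :=
  U * Matrix.diagonal f * star U

lemma conjD_mul {U : Matrix (Fin d) (Fin d) ℝ} (hU : U ∈ Matrix.unitaryGroup (Fin d) ℝ)
    (f g : Fin d → ℝ) : conjD U f * conjD U g = conjD U (fun i => f i * g i) := by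
  unfold conjD
  calc U * Matrix.diagonal f * star U * (U * Matrix.diagonal g * star U)
      = U * (Matrix.diagonal f * ((star U * U) * (Matrix.diagonal g * star U))) := by
        simp only [Matrix.mul_assoc]
    _ = U * (Matrix.diagonal f * (Matrix.diagonal g * star U)) := by
        rw [(Matrix.mem_unitaryGroup_iff').mp hU, Matrix.one_mul]
    _ = U * (Matrix.diagonal f * Matrix.diagonal g * star U) := by
        rw [Matrix.mul_assoc (Matrix.diagonal f)]
    _ = U * ((Matrix.diagonal fun i => f i * g i) * star U) := by
        rw [Matrix.diagonal_mul_diagonal]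
    _ = U * (Matrix.diagonal fun i => f i * g i) * star U := by
        rw [Matrix.mul_assoc]

lemma conjD_add {U : Matrix (Fin d) (Fin d) ℝ} (f g : Fin d → ℝ) :
    conjD U f + conjD U g = conjD U (fun i => f i + g i) := by
  unfold conjD
  rw [← Matrix.add_mul, ← Matrix.mul_add, Matrix.diagonal_add]

lemma conjD_sub {U : Matrix (Fin d) (Fin d) ℝ} (f g : Fin d → ℝ) :
    conjD U f - conjD U g = conjD U (fun i => f i - g i) := by
  unfold conjD
  rw [← Matrix.sub_mul, ← Matrix.mul_sub, Matrix.diagonal_sub]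

lemma conjD_one {U : Matrix (Fin d) (Fin d) ℝ} (hU : U ∈ Matrix.unitaryGroup (Fin d) ℝ) :
    conjD U (fun _ => 1) = 1 := by
  unfold conjD
  rw [show (Matrix.diagonal (fun _ : Fin d => (1:ℝ))) = 1 from Matrix.diagonal_one,
    Matrix.mul_one, (Matrix.mem_unitaryGroup_iff).mp hU]

lemma conjD_smul_one {U : Matrix (Fin d) (Fin d) ℝ} (hU : U ∈ Matrix.unitaryGroup (Fin d) ℝ)
    (c : ℝ) : c • (1 : Matrix (Fin d) (Fin d) ℝ) = conjD U (fun _ => c) := by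
  unfold conjD
  rw [show (Matrix.diagonal fun _ : Fin d => c) = c • (1 : Matrix (Fin d) (Fin d) ℝ) by
      ext i j; by_cases h : i = j <;> simp [Matrix.one_apply, Matrix.diagonal_apply, h]]
  rw [Matrix.mul_smul, Matrix.smul_mul, Matrix.mul_one, (Matrix.mem_unitaryGroup_iff).mp hU]

lemma conjD_herm {U : Matrix (Fin d) (Fin d) ℝ} (f : Fin d → ℝ) : (conjD U f).IsHermitian := by
  unfold conjD
  simp [Matrix.IsHermitian, Matrix.star_eq_conjTranspose, Matrix.conjTranspose_mul,
    Matrix.diagonal_conjTranspose, Matrix.mul_assoc]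

lemma conjD_psd {U : Matrix (Fin d) (Fin d) ℝ} {f : Fin d → ℝ} (hf : ∀ i, 0 ≤ f i) :
    (conjD U f).PosSemidef := by
  have := (Matrix.posSemidef_diagonal_iff.mpr hf).mul_mul_conjTranspose_same U
  simpa [conjD, Matrix.star_eq_conjTranspose] using this

lemma conjD_inv {U : Matrix (Fin d) (Fin d) ℝ} (hU : U ∈ Matrix.unitaryGroup (Fin d) ℝ)
    {f : Fin d → ℝ} (hf : ∀ i, f i ≠ 0) :
    (conjD U f)⁻¹ = conjD U (fun i => (f i)⁻¹) := by
  apply Matrix.inv_eq_right_inv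
  rw [conjD_mul hU]
  rw [show (fun i : Fin d => f i * (f i)⁻¹) = fun _ : Fin d => (1:ℝ) by
    funext i; exact mul_inv_cancel₀ (hf i)]
  exact conjD_one hU

lemma smul_one_herm (c : ℝ) : (c • (1 : Matrix (Fin d) (Fin d) ℝ)).IsHermitian := by
  unfold Matrix.IsHermitian
  rw [Matrix.conjTranspose_smul]
  simp

lemma psd_apply {A : Matrix (Fin d) (Fin d) ℝ} (hA : A.PosSemidef) (x : Fin d → ℝ) :
    0 ≤ x ⬝ᵥ A *ᵥ x := by
  have := hA.dotProduct_mulVec_nonneg x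
  simpa using this

lemma eigBasis_dot {A : Matrix (Fin d) (Fin d) ℝ} (hA : A.IsHermitian) (i : Fin d) :
    (⇑(hA.eigenvectorBasis i) : Fin d → ℝ) ⬝ᵥ ⇑(hA.eigenvectorBasis i) = 1 := by
  have hnorm : ‖hA.eigenvectorBasis i‖ = 1 := hA.eigenvectorBasis.orthonormal.1 i
  have h := real_inner_self_eq_norm_sq (hA.eigenvectorBasis i)
  rw [hnorm] at h
  simp only [PiLp.inner_apply, RCLike.inner_apply, starRingEnd_apply, star_trivial] at h
  simpa [dotProduct] using h.trans (by norm_num)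

lemma eig_ge {A : Matrix (Fin d) (Fin d) ℝ} (hA : A.IsHermitian) {c : ℝ}
    (h : (A - c • 1).PosSemidef) (i : Fin d) : c ≤ hA.eigenvalues i := by
  set v : Fin d → ℝ := ⇑(hA.eigenvectorBasis i) with hv
  have hmv : A *ᵥ v = hA.eigenvalues i • v := hA.mulVec_eigenvectorBasis i
  have hdot : v ⬝ᵥ v = 1 := eigBasis_dot hA i
  have h0 := psd_apply h v
  rw [Matrix.sub_mulVec, hmv, Matrix.smul_mulVec, Matrix.one_mulVec,
    dotProduct_sub, dotProduct_smul, dotProduct_smul, hdot] at h0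
  simp only [smul_eq_mul, mul_one] at h0
  linarith

lemma eig_lt {A : Matrix (Fin d) (Fin d) ℝ} (hA : A.IsHermitian) {c : ℝ}
    (h : (c • 1 - A).PosDef) (i : Fin d) : hA.eigenvalues i < c := by
  set v : Fin d → ℝ := ⇑(hA.eigenvectorBasis i) with hv
  have hmv : A *ᵥ v = hA.eigenvalues i • v := hA.mulVec_eigenvectorBasis i
  have hdot : v ⬝ᵥ v = 1 := eigBasis_dot hA i
  have hvne : v ≠ 0 := by
    intro h0
    rw [h0] at hdot
    simp [dotProduct] at hdot
  have h0 := h.dotProduct_mulVec_pos hvne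
  simp only [star_trivial] at h0
  rw [Matrix.sub_mulVec, hmv, Matrix.smul_mulVec, Matrix.one_mulVec,
    dotProduct_sub, dotProduct_smul, dotProduct_smul, hdot] at h0
  simp only [smul_eq_mul, mul_one] at h0
  linarith

lemma dot_self_nonneg (x : Fin d → ℝ) : 0 ≤ x ⬝ᵥ x :=
  Finset.sum_nonneg fun i _ => mul_self_nonneg (x i)

lemma inv_upper {A : Matrix (Fin d) (Fin d) ℝ} (hA : A.PosDef) {α : ℝ} (hα : 0 < α)
    (h : (A - α • 1).PosSemidef) :
    ((α⁻¹ • 1 : Matrix (Fin d) (Fin d) ℝ) - A⁻¹).PosSemidef := by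
  have hdet : IsUnit A.det := hA.det_pos.ne'.isUnit
  refine Matrix.PosSemidef.of_dotProduct_mulVec_nonneg ?_ ?_
  · exact (smul_one_herm α⁻¹).sub hA.isHermitian.inv
  · intro x
    simp only [star_trivial]
    set y : Fin d → ℝ := A⁻¹ *ᵥ x with hy
    have hxy : A *ᵥ y = x := by
      rw [hy, Matrix.mulVec_mulVec, Matrix.mul_nonsing_inv _ hdet, Matrix.one_mulVec]
    have h1 : 0 ≤ y ⬝ᵥ x - α * (y ⬝ᵥ y) := by
      have h0 := psd_apply h y
      rw [Matrix.sub_mulVec, hxy, Matrix.smul_mulVec, Matrix.one_mulVec,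
        dotProduct_sub, dotProduct_smul] at h0
      simpa using h0
    have hcs : (x ⬝ᵥ y) ^ 2 ≤ (x ⬝ᵥ x) * (y ⬝ᵥ y) := by
      have := Finset.sum_mul_sq_le_sq_mul_sq Finset.univ x y
      simpa [dotProduct, pow_two] using this
    have hyx : y ⬝ᵥ x = x ⬝ᵥ y := dotProduct_comm y x
    have hxx : 0 ≤ x ⬝ᵥ x := dot_self_nonneg x
    have hyy : 0 ≤ y ⬝ᵥ y := dot_self_nonneg y
    rw [Matrix.sub_mulVec, Matrix.smul_mulVec, Matrix.one_mulVec,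
      dotProduct_sub, dotProduct_smul]
    simp only [smul_eq_mul, sub_nonneg]
    rw [hyx] at h1
    rcases le_or_gt (x ⬝ᵥ y) 0 with ht | ht
    · calc x ⬝ᵥ (A⁻¹ *ᵥ x) = x ⬝ᵥ y := rfl
        _ ≤ 0 := ht
        _ ≤ α⁻¹ * (x ⬝ᵥ x) := by positivity
    · have key : x ⬝ᵥ y ≤ α⁻¹ * (x ⬝ᵥ x) := by
        rw [inv_mul_eq_div, le_div_iff₀ hα]
        nlinarith [h1, hcs, ht]
      exact key

lemma spectral_conjD {A : Matrix (Fin d) (Fin d) ℝ} (hA : A.IsHermitian) :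
    A = conjD (hA.eigenvectorUnitary : Matrix (Fin d) (Fin d) ℝ) hA.eigenvalues := by
  have h := hA.spectral_theorem
  simp only [Unitary.conjStarAlgAut_apply, RCLike.ofReal_real_eq_id, Function.id_comp] at h
  unfold conjD
  exact h

lemma psd_of_eig_ge {A : Matrix (Fin d) (Fin d) ℝ} (hA : A.IsHermitian) {c : ℝ}
    (h : ∀ i, c ≤ hA.eigenvalues i) : (A - c • 1).PosSemidef := by
  have hU := (hA.eigenvectorUnitary).2
  rw [spectral_conjD hA, conjD_smul_one hU, conjD_sub]
  exact conjD_psd (fun i => sub_nonneg.2 (h i))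

end Helpers


lemma key_step {d : ℕ} {S Sig : Matrix (Fin d) (Fin d) ℝ}
    (hSH : S.IsHermitian) (hSigH : Sig.IsHermitian) {η : ℝ} (hη : 0 < η)
    (hSlb : (S - η • 1).PosSemidef) (hSiglb : (Sig - η • 1).PosSemidef)
    {r : ℝ} (hr : 0 ≤ r) {B : Matrix (Fin d) (Fin d) ℝ}
    (hBdef : B = matPow (S * (S + 1)⁻¹) r) :
    (S + B * (Sig - S) * B).IsHermitian ∧
    ((S + B * (Sig - S) * B) - η • 1).PosSemidef ∧
    ∀ e : Fin d → ℝ, ((1 - B) *ᵥ e) ⬝ᵥ ((1 - B) *ᵥ e) ≤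
      (1 - (η / (1 + η)) ^ (2 * r)) * (e ⬝ᵥ e) := by
  have hη1 : (0:ℝ) < 1 + η := by linarith
  have hsm1pd : ∀ c : ℝ, 0 < c → ((c • 1 : Matrix (Fin d) (Fin d) ℝ)).PosDef := by
    intro c hc
    refine Matrix.PosDef.of_dotProduct_mulVec_pos (smul_one_herm c) (fun x hx => ?_)
    rw [Matrix.smul_mulVec, Matrix.one_mulVec, dotProduct_smul, smul_eq_mul]
    exact mul_pos hc (Matrix.dotProduct_star_self_pos_iff.mpr hx)
  have hSpd : S.PosDef := by
    have h := Matrix.PosDef.posSemidef_add hSlb (hsm1pd η hη)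
    simpa using h
  have hS1pd : (S + 1).PosDef := hSpd.add Matrix.PosDef.one
  have hdet : IsUnit (S + 1).det := hS1pd.det_pos.ne'.isUnit
  have hMdef : S * (S + 1)⁻¹ = 1 - (S + 1)⁻¹ := by
    calc S * (S + 1)⁻¹ = ((S + 1) - 1) * (S + 1)⁻¹ := by rw [add_sub_cancel_right]
      _ = (S + 1) * (S + 1)⁻¹ - 1 * (S + 1)⁻¹ := by rw [Matrix.sub_mul]
      _ = 1 - (S + 1)⁻¹ := by rw [Matrix.mul_nonsing_inv _ hdet, Matrix.one_mul]
  have hinvpd : ((S + 1)⁻¹).PosDef := hS1pd.inv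
  have hM : (S * (S + 1)⁻¹).IsHermitian := by
    rw [hMdef]; exact Matrix.isHermitian_one.sub hinvpd.1
  set U : Matrix (Fin d) (Fin d) ℝ := (hM.eigenvectorUnitary : Matrix (Fin d) (Fin d) ℝ)
    with hUdef
  have hU : U ∈ Matrix.unitaryGroup (Fin d) ℝ := (hM.eigenvectorUnitary).2
  set μ : Fin d → ℝ := hM.eigenvalues with hmudef
  have hspec : S * (S + 1)⁻¹ = conjD U μ := spectral_conjD hM
  have hMub : ∀ i, μ i < 1 := by
    intro i
    apply eig_lt hM
    rw [one_smul, hMdef, sub_sub_cancel]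
    exact hinvpd
  have hMlb : ∀ i, η / (1 + η) ≤ μ i := by
    intro i
    apply eig_ge hM
    have h2 : ((S + 1) - (1 + η) • 1).PosSemidef := by
      rw [show (S + 1) - (1 + η) • (1 : Matrix (Fin d) (Fin d) ℝ) = S - η • 1 by
        rw [add_smul, one_smul]; abel]
      exact hSlb
    have h3 := inv_upper hS1pd hη1 h2
    rw [show S * (S + 1)⁻¹ - (η / (1 + η)) • 1
        = ((1 + η)⁻¹ • 1 : Matrix (Fin d) (Fin d) ℝ) - (S + 1)⁻¹ by
      rw [hMdef, show ((1 + η)⁻¹ : ℝ) = 1 - η / (1 + η) by field_simp; ring, sub_smul, one_smul]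
      abel]
    exact h3
  have hμ0 : ∀ i, 0 ≤ μ i := fun i => le_trans (div_nonneg hη.le hη1.le) (hMlb i)
  have hBc : B = conjD U (fun i => μ i ^ r) := by
    rw [hBdef]
    unfold matPow
    rw [dif_pos hM]
    rfl
  have hBH : B.IsHermitian := by rw [hBc]; exact conjD_herm _
  have hSinv : (S + 1)⁻¹ = conjD U (fun i => 1 - μ i) := by
    have h1 : (S + 1)⁻¹ = 1 - S * (S + 1)⁻¹ := by rw [hMdef, sub_sub_cancel]
    rw [h1, hspec, show (1 : Matrix (Fin d) (Fin d) ℝ) = conjD U (fun _ => 1)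
      from (conjD_one hU).symm, conjD_sub]
  have hμne : ∀ i, 1 - μ i ≠ 0 := fun i => ne_of_gt (by linarith [hMub i])
  have hS1c : S + 1 = conjD U (fun i => (1 - μ i)⁻¹) := by
    rw [← Matrix.nonsing_inv_nonsing_inv (S + 1) hdet, hSinv, conjD_inv hU hμne]
  have hSc : S = conjD U (fun i => (1 - μ i)⁻¹ - 1) := by
    have h5 : S = conjD U (fun i => (1 - μ i)⁻¹) - 1 := eq_sub_of_add_eq hS1c
    rw [h5, show (1 : Matrix (Fin d) (Fin d) ℝ) = conjD U (fun _ => 1)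
      from (conjD_one hU).symm, conjD_sub]
  have hlamlb : ∀ i, η ≤ (1 - μ i)⁻¹ - 1 := by
    intro i
    have h1 : 0 < 1 - μ i := by linarith [hMub i]
    have h2 : 1 - μ i ≤ (1 + η)⁻¹ := by
      have h := hMlb i
      have h' : (1:ℝ) - η / (1 + η) = (1 + η)⁻¹ := by field_simp; ring
      linarith
    have h4 : (1 + η) * (1 - μ i) ≤ 1 := by
      have := mul_le_mul_of_nonneg_left h2 hη1.le
      rwa [mul_inv_cancel₀ hη1.ne'] at this
    have h3 : 1 + η ≤ (1 - μ i)⁻¹ := by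
      rw [← one_div, le_div_iff₀ h1]
      linarith
    linarith
  have hμub1 : ∀ i, μ i ^ r ≤ 1 := fun i => Real.rpow_le_one (hμ0 i) (hMub i).le hr
  have hμlbr : ∀ i, (η / (1 + η)) ^ r ≤ μ i ^ r :=
    fun i => Real.rpow_le_rpow (div_nonneg hη.le hη1.le) (hMlb i) hr
  have hμr0 : ∀ i, 0 ≤ μ i ^ r := fun i => Real.rpow_nonneg (hμ0 i) r
  have hexp : S + B * (Sig - S) * B - η • 1
      = (S - η • 1 - B * S * B + B * ((η : ℝ) • 1) * B) + B * (Sig - η • 1) * B := by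
    simp only [Matrix.mul_sub, Matrix.sub_mul]
    abel
  have hpart : S - η • 1 - B * S * B + B * ((η : ℝ) • 1) * B
      = conjD U (fun i => (((1 - μ i)⁻¹ - 1) - η) * (1 - μ i ^ r * μ i ^ r)) := by
    rw [hSc, hBc, conjD_smul_one hU η]
    simp only [conjD_mul hU]
    rw [conjD_sub, conjD_sub, conjD_add]
    refine congrArg (conjD U) ?_
    funext i
    ring
  have hpsd1 : (conjD U
      (fun i => (((1 - μ i)⁻¹ - 1) - η) * (1 - μ i ^ r * μ i ^ r))).PosSemidef := by
    apply conjD_psd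
    intro i
    apply mul_nonneg
    · linarith [hlamlb i]
    · nlinarith [hμub1 i, hμr0 i]
  have hpsd2 : (B * (Sig - η • 1) * B).PosSemidef := by
    have h := hSiglb.mul_mul_conjTranspose_same B
    rwa [hBH] at h
  have hstep2 : ((S + B * (Sig - S) * B) - η • 1).PosSemidef := by
    rw [show (S + B * (Sig - S) * B) - η • 1 = S + B * (Sig - S) * B - η • 1 from rfl,
      hexp, hpart]
    exact hpsd1.add hpsd2
  have hstep1 : (S + B * (Sig - S) * B).IsHermitian := by
    have h6 : S + B * (Sig - S) * B = ((S + B * (Sig - S) * B) - η • 1) + η • 1 := by abel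
    rw [h6]
    exact hstep2.1.add (smul_one_herm η)
  refine ⟨hstep1, hstep2, ?_⟩
  intro e
  have hC : (1 - B) * (1 - B) = conjD U (fun i => (1 - μ i ^ r) * (1 - μ i ^ r)) := by
    rw [hBc, show (1 : Matrix (Fin d) (Fin d) ℝ) = conjD U (fun _ => 1)
      from (conjD_one hU).symm, conjD_sub, conjD_mul hU]
  have h1B : (1 - B).IsHermitian := Matrix.isHermitian_one.sub hBH
  have h1Bt : (1 - B)ᵀ = 1 - B := by
    ext i j
    rw [Matrix.transpose_apply]
    have h7 := congrFun (congrFun h1B i) j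
    simpa [Matrix.conjTranspose_apply] using h7
  have htr : ((1 - B) *ᵥ e) ⬝ᵥ ((1 - B) *ᵥ e) = e ⬝ᵥ ((1 - B) * (1 - B)) *ᵥ e := by
    calc ((1 - B) *ᵥ e) ⬝ᵥ ((1 - B) *ᵥ e)
        = (((1 - B) *ᵥ e) ᵥ* (1 - B)) ⬝ᵥ e := Matrix.dotProduct_mulVec _ _ _
      _ = ((1 - B)ᵀ *ᵥ ((1 - B) *ᵥ e)) ⬝ᵥ e := by rw [Matrix.mulVec_transpose]
      _ = (((1 - B) * (1 - B)) *ᵥ e) ⬝ᵥ e := by rw [h1Bt, Matrix.mulVec_mulVec]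
      _ = e ⬝ᵥ ((1 - B) * (1 - B)) *ᵥ e := dotProduct_comm _ _
  have hm2 : ((η / (1 + η)) ^ r) * ((η / (1 + η)) ^ r) = (η / (1 + η)) ^ (2 * r) := by
    rw [show (2:ℝ) * r = r + r by ring, Real.rpow_add (div_pos hη hη1)]
  have hKpsd : (((1 - (η / (1 + η)) ^ (2 * r)) • 1 : Matrix (Fin d) (Fin d) ℝ)
      - (1 - B) * (1 - B)).PosSemidef := by
    rw [hC, conjD_smul_one hU, conjD_sub]
    apply conjD_psd
    intro i
    have h8 := hμlbr i
    have h9 := hμub1 i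
    have h10 := hμr0 i
    have h11 : 0 ≤ (η / (1 + η)) ^ r := Real.rpow_nonneg (div_nonneg hη.le hη1.le) r
    rw [← hm2]
    nlinarith [mul_nonneg h10 (sub_nonneg.2 h9),
      mul_nonneg (sub_nonneg.2 h8) (add_nonneg h10 h11)]
  have hfin := psd_apply hKpsd e
  rw [Matrix.sub_mulVec, Matrix.smul_mulVec, Matrix.one_mulVec, dotProduct_sub,
    dotProduct_smul] at hfin
  simp only [smul_eq_mul] at hfin
  rw [htr]
  linarith

/-- **Gaussian AWGN mean iteration, linear convergence.**
With the covariance iterates `Σ_{k+1} = Σ_k + B_k (Sig - Σ_k) B_k`,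
`B_k = (Σ_k (Σ_k + I)⁻¹)^((1+ε)/2)`, the mean iterates `b_{k+1} = b_k + B_k (b - b_k)`
satisfy `‖b - b_k‖² ≤ (1 - η^(1+ε) (1+η)^(-(1+ε)))^k ‖b - b₀‖²`, where `‖·‖` is the
Euclidean norm (so `‖v‖² = ∑ i, v i ^ 2`). -/
theorem mean_iteration_linear_convergence
    {d : ℕ} (hd : 1 ≤ d)
    (Sig Sig0 : Matrix (Fin d) (Fin d) ℝ) (hSig : Sig.PosDef) (hSig0 : Sig0.PosDef)
    (ε : ℝ) (hε : 0 ≤ ε)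
    (η : ℝ) (hη : η = min (lamMin Sig) (lamMin Sig0)) (hηpos : 0 < η)
    (S B : ℕ → Matrix (Fin d) (Fin d) ℝ)
    (hS0 : S 0 = Sig0)
    (hB : ∀ k, B k = matPow (S k * (S k + 1)⁻¹) ((1 + ε) / 2))
    (hSrec : ∀ k, S (k + 1) = S k + B k * (Sig - S k) * B k)
    (b b₀ : Fin d → ℝ) (bseq : ℕ → Fin d → ℝ)
    (hb0 : bseq 0 = b₀)
    (hbrec : ∀ k, bseq (k + 1) = bseq k + (B k).mulVec (b - bseq k)) :
    ∀ k : ℕ, (∑ i, (b i - bseq k i) ^ 2) ≤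
      (1 - η ^ (1 + ε) * (1 + η) ^ (-(1 + ε))) ^ k * ∑ i, (b i - b₀ i) ^ 2 := by
  have hr : (0:ℝ) ≤ (1 + ε) / 2 := by linarith
  have hη1 : (0:ℝ) < 1 + η := by linarith
  have hlamSig : lamMin Sig = ⨅ i, hSig.1.eigenvalues i := by
    unfold lamMin; rw [dif_pos hSig.1]
  have hlamSig0 : lamMin Sig0 = ⨅ i, hSig0.1.eigenvalues i := by
    unfold lamMin; rw [dif_pos hSig0.1]
  have hne : Nonempty (Fin d) := ⟨⟨0, hd⟩⟩
  have hSiglb : (Sig - η • 1).PosSemidef := by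
    apply psd_of_eig_ge hSig.1
    intro i
    calc η ≤ lamMin Sig := by rw [hη]; exact min_le_left _ _
      _ ≤ hSig.1.eigenvalues i := by
          rw [hlamSig]; exact ciInf_le (Set.Finite.bddBelow (Set.finite_range _)) i
  have hSig0lb : (Sig0 - η • 1).PosSemidef := by
    apply psd_of_eig_ge hSig0.1
    intro i
    calc η ≤ lamMin Sig0 := by rw [hη]; exact min_le_right _ _
      _ ≤ hSig0.1.eigenvalues i := by
          rw [hlamSig0]; exact ciInf_le (Set.Finite.bddBelow (Set.finite_range _)) i
  have hinv : ∀ k, (S k).IsHermitian ∧ ((S k) - η • 1).PosSemidef := by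
    intro k
    induction k with
    | zero => rw [hS0]; exact ⟨hSig0.1, hSig0lb⟩
    | succ k ih =>
      have h := key_step ih.1 hSig.1 hηpos ih.2 hSiglb hr (hB k)
      rw [hSrec k]
      exact ⟨h.1, h.2.1⟩
  have hKeq : 1 - η ^ (1 + ε) * (1 + η) ^ (-(1 + ε))
      = 1 - (η / (1 + η)) ^ (2 * ((1 + ε) / 2)) := by
    rw [show (2:ℝ) * ((1 + ε) / 2) = 1 + ε by ring,
      Real.div_rpow hηpos.le hη1.le, Real.rpow_neg hη1.le, div_eq_mul_inv]
  have hK0 : 0 ≤ 1 - η ^ (1 + ε) * (1 + η) ^ (-(1 + ε)) := by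
    rw [hKeq]
    have h1 : (η / (1 + η)) ^ (2 * ((1 + ε) / 2)) ≤ 1 :=
      Real.rpow_le_one (div_nonneg hηpos.le hη1.le)
        (by rw [div_le_one hη1]; linarith) (by linarith)
    linarith
  have hsum : ∀ w v : Fin d → ℝ, (∑ i, (w i - v i) ^ 2) = (w - v) ⬝ᵥ (w - v) := by
    intro w v
    simp [dotProduct, pow_two]
  intro k
  induction k with
  | zero => simp [hb0]
  | succ k ih =>
    have h := (key_step (hinv k).1 hSig.1 hηpos (hinv k).2 hSiglb hr (hB k)).2.2 (b - bseq k)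
    have herr : b - bseq (k + 1) = (1 - B k) *ᵥ (b - bseq k) := by
      rw [hbrec k, Matrix.sub_mulVec, Matrix.one_mulVec]
      abel
    calc (∑ i, (b i - bseq (k + 1) i) ^ 2)
        = (b - bseq (k + 1)) ⬝ᵥ (b - bseq (k + 1)) := hsum b (bseq (k + 1))
      _ = ((1 - B k) *ᵥ (b - bseq k)) ⬝ᵥ ((1 - B k) *ᵥ (b - bseq k)) := by rw [herr]
      _ ≤ (1 - (η / (1 + η)) ^ (2 * ((1 + ε) / 2))) * ((b - bseq k) ⬝ᵥ (b - bseq k)) := h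
      _ = (1 - η ^ (1 + ε) * (1 + η) ^ (-(1 + ε))) * ((b - bseq k) ⬝ᵥ (b - bseq k)) := by
          rw [← hKeq]
      _ = (1 - η ^ (1 + ε) * (1 + η) ^ (-(1 + ε))) * (∑ i, (b i - bseq k i) ^ 2) := by
          rw [hsum b (bseq k)]
      _ ≤ (1 - η ^ (1 + ε) * (1 + η) ^ (-(1 + ε)))
          * ((1 - η ^ (1 + ε) * (1 + η) ^ (-(1 + ε))) ^ k * ∑ i, (b i - b₀ i) ^ 2) :=
          mul_le_mul_of_nonneg_left ih hK0
      _ = (1 - η ^ (1 + ε) * (1 + η) ^ (-(1 + ε))) ^ (k + 1) * ∑ i, (b i - b₀ i) ^ 2 := by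
          ring
end

section
/- Let A and S be real symmetric positive semidefinite d×d matrices and let B be a real symmetric d×d matrix with 0 ⪯ B ⪯ I that commutes with A. Then (I − B²) A + B S B ⪰ min(λ_min(A), λ_min(S)) · I in the Loewner order. -/
open Matrix

private lemma sub_smul_one_posSemidef {d : ℕ} {A : Matrix (Fin d) (Fin d) ℝ}
    (hA : A.IsHermitian) {c : ℝ} (h : ∀ i, c ≤ hA.eigenvalues i) :
    (A - c • (1 : Matrix (Fin d) (Fin d) ℝ)).PosSemidef := by
  have hU : (hA.eigenvectorUnitary : Matrix (Fin d) (Fin d) ℝ) *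
      star (hA.eigenvectorUnitary : Matrix (Fin d) (Fin d) ℝ) = 1 :=
    (Matrix.mem_unitaryGroup_iff).mp hA.eigenvectorUnitary.2
  have key : A - c • (1 : Matrix (Fin d) (Fin d) ℝ) =
      (hA.eigenvectorUnitary : Matrix (Fin d) (Fin d) ℝ) *
        (diagonal (fun i => hA.eigenvalues i - c)) *
        star (hA.eigenvectorUnitary : Matrix (Fin d) (Fin d) ℝ) := by
    have hdiag : diagonal (fun i => hA.eigenvalues i - c) =
        diagonal (RCLike.ofReal ∘ hA.eigenvalues) - c • (1 : Matrix (Fin d) (Fin d) ℝ) := by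
      simp [← Matrix.diagonal_one, ← Matrix.diagonal_smul, ← Matrix.diagonal_sub]
    rw [hdiag, mul_sub, sub_mul]
    conv_lhs => rw [hA.spectral_theorem, Unitary.conjStarAlgAut_apply]
    congr 1
    rw [Matrix.mul_smul, mul_one, Matrix.smul_mul, hU]
  rw [key, Matrix.star_eq_conjTranspose]
  exact (posSemidef_diagonal_iff.mpr (fun i => sub_nonneg.mpr (h i))).mul_mul_conjTranspose_same _

private lemma mul_posSemidef_of_commute {d : ℕ} {P Q : Matrix (Fin d) (Fin d) ℝ}
    (hP : P.PosSemidef) (hQ : Q.PosSemidef) (h : P * Q = Q * P) :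
    (P * Q).PosSemidef := by
  have hH : (P * Q).IsHermitian := by
    rw [Matrix.IsHermitian, conjTranspose_mul, hP.1, hQ.1, ← h]
  refine hH.posSemidef_iff_eigenvalues_nonneg.mpr fun i => ?_
  set t := hH.eigenvalues i with ht
  set v : Fin d → ℝ := ⇑(hH.eigenvectorBasis i) with hv
  have hev : (P * Q) *ᵥ v = t • v := hH.mulVec_eigenvectorBasis i
  have hvne : v ≠ 0 := by
    intro h0
    apply hH.eigenvectorBasis.toBasis.ne_zero i
    ext j
    exact congrFun h0 j
  have hQPQ : (Q * P * Q).PosSemidef := by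
    have := hP.conjTranspose_mul_mul_same Q
    rwa [hQ.1] at this
  have hkey : 0 ≤ t * (v ⬝ᵥ Q *ᵥ v) := by
    have h2 := hQPQ.dotProduct_mulVec_nonneg v
    rw [star_trivial] at h2
    have hPQv : P *ᵥ (Q *ᵥ v) = t • v := by
      rw [Matrix.mulVec_mulVec, hev]
    have : (Q * P * Q) *ᵥ v = t • (Q *ᵥ v) := by
      rw [← Matrix.mulVec_mulVec, ← Matrix.mulVec_mulVec, hPQv, Matrix.mulVec_smul]
    rw [this, dotProduct_smul, smul_eq_mul] at h2
    exact h2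
  have hq : 0 ≤ v ⬝ᵥ Q *ᵥ v := by
    have := hQ.dotProduct_mulVec_nonneg v; rwa [star_trivial] at this
  rcases hq.eq_or_lt with hq0 | hqpos
  · have hQv : Q *ᵥ v = 0 := by
      have := (hQ.dotProduct_mulVec_zero_iff v).mp (by rw [star_trivial]; exact hq0.symm)
      exact this
    have : t • v = 0 := by
      rw [← hev, ← Matrix.mulVec_mulVec, hQv, Matrix.mulVec_zero]
    rcases smul_eq_zero.mp this with h0 | h0
    · exact h0.ge
    · exact absurd h0 hvne
  · exact le_of_not_gt fun htneg => absurd hkey (not_le.mpr (mul_neg_of_neg_of_pos htneg hqpos))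

/-- For real symmetric positive semidefinite `A`, `S` and a real symmetric `B` with
`0 ⪯ B ⪯ I` commuting with `A`, one has
`(I - B²) A + B S B ⪰ min (λmin A) (λmin S) • I` in the Loewner order. -/
theorem combination_ge_min_lamMin_smul_one
    {d : ℕ} (A S B : Matrix (Fin d) (Fin d) ℝ)
    (hA : A.PosSemidef) (hS : S.PosSemidef) (hB : B.PosSemidef)
    (hBI : ((1 : Matrix (Fin d) (Fin d) ℝ) - B).PosSemidef)
    (hcomm : B * A = A * B) :
    ((((1 : Matrix (Fin d) (Fin d) ℝ) - B * B) * A + B * S * B) -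
      min (lamMin A) (lamMin S) • (1 : Matrix (Fin d) (Fin d) ℝ)).PosSemidef := by
  set m : ℝ := min (lamMin A) (lamMin S) with hm
  have hlamA : lamMin A = ⨅ i, hA.1.eigenvalues i := by rw [lamMin, dif_pos hA.1]
  have hlamS : lamMin S = ⨅ i, hS.1.eigenvalues i := by rw [lamMin, dif_pos hS.1]
  have hAm : (A - m • (1 : Matrix (Fin d) (Fin d) ℝ)).PosSemidef := by
    refine sub_smul_one_posSemidef hA.1 fun i => ?_
    refine le_trans (min_le_left _ _) ?_
    rw [hlamA]
    exact ciInf_le (Set.Finite.bddBelow (Set.finite_range _)) i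
  have hSm : (S - m • (1 : Matrix (Fin d) (Fin d) ℝ)).PosSemidef := by
    refine sub_smul_one_posSemidef hS.1 fun i => ?_
    refine le_trans (min_le_right _ _) ?_
    rw [hlamS]
    exact ciInf_le (Set.Finite.bddBelow (Set.finite_range _)) i
  have hBB : ((1 : Matrix (Fin d) (Fin d) ℝ) - B * B).PosSemidef := by
    have h1 : ((1 - B) * B).PosSemidef :=
      mul_posSemidef_of_commute hBI hB (by noncomm_ring)
    have h2 : ((1 - B) * B + (1 - B)).PosSemidef := h1.add hBI
    have : (1 : Matrix (Fin d) (Fin d) ℝ) - B * B = (1 - B) * B + (1 - B) := by noncomm_ring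
    rwa [this]
  have hX : (((1 : Matrix (Fin d) (Fin d) ℝ) - B * B) *
      (A - m • (1 : Matrix (Fin d) (Fin d) ℝ))).PosSemidef := by
    refine mul_posSemidef_of_commute hBB hAm ?_
    have hc : Commute ((1 : Matrix (Fin d) (Fin d) ℝ) - B * B)
        (A - m • (1 : Matrix (Fin d) (Fin d) ℝ)) := by
      have h1 : Commute B A := hcomm
      have h2 : Commute ((1 : Matrix (Fin d) (Fin d) ℝ) - B * B) A :=
        (Commute.one_left A).sub_left (h1.mul_left h1)
      exact h2.sub_right ((Commute.one_right _).smul_right m)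
    exact hc
  have hY : (B * (S - m • (1 : Matrix (Fin d) (Fin d) ℝ)) * B).PosSemidef := by
    have := hSm.mul_mul_conjTranspose_same B
    rwa [hB.1] at this
  have hsum := hX.add hY
  have hdecomp : (((1 : Matrix (Fin d) (Fin d) ℝ) - B * B) * A + B * S * B) -
      m • (1 : Matrix (Fin d) (Fin d) ℝ) =
      ((1 : Matrix (Fin d) (Fin d) ℝ) - B * B) * (A - m • (1 : Matrix (Fin d) (Fin d) ℝ)) +
        B * (S - m • (1 : Matrix (Fin d) (Fin d) ℝ)) * B := by
    simp only [mul_sub, sub_mul, Matrix.mul_smul, Matrix.smul_mul, mul_one, one_mul,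
      smul_sub]
    abel
  rw [hdecomp]
  exact hsum
end

section
/- Let A and Σ be real symmetric positive definite d×d matrices, and set M = A (A + I)^{-1}. Then the matrix (Σ + I)^{-1} − (A + I)^{-1} + I is positive definite, the matrix A + M (Σ − A) M is positive definite, and its inverse satisfies (A + M (Σ − A) M)^{-1} = A^{-1} + I − ((Σ + I)^{-1} − (A + I)^{-1} + I)^{-1}. Equivalently, the EM covariance update for centered Gaussians under the AWGN channel, defined through the precision update Σ'^{-1} = A^{-1} + I − ((Σ+I)^{-1} − (A+I)^{-1} + I)^{-1}, equals Σ' = A + M (Σ − A) M. -/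
open Matrix

/-- Conjugation of a positive definite matrix by an invertible matrix is positive definite. -/
lemma posDef_conj_aux {n : Type*} [Fintype n] [DecidableEq n] {P N : Matrix n n ℝ}
    (hP : P.PosDef) (hN : IsUnit N) : (Nᴴ * P * N).PosDef := by
  refine Matrix.PosDef.of_dotProduct_mulVec_pos (Matrix.isHermitian_conjTranspose_mul_mul N hP.1) fun x hx => ?_
  have hinj : Function.Injective N.mulVec := Matrix.mulVec_injective_iff_isUnit.mpr hN
  have hx' : N *ᵥ x ≠ 0 := by
    intro h
    apply hx
    apply hinj
    simpa using h
  have key : star x ⬝ᵥ (Nᴴ * P * N) *ᵥ x = star (N *ᵥ x) ⬝ᵥ P *ᵥ (N *ᵥ x) := by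
    rw [← Matrix.mulVec_mulVec, ← Matrix.mulVec_mulVec, Matrix.dotProduct_mulVec,
      ← Matrix.star_mulVec]
  rw [key]
  exact hP.dotProduct_mulVec_pos hx'

/-- **EM covariance update equals the SCSI covariance update at `ε = 1`** (Gaussian AWGN).
For symmetric positive definite `A` and `Sig`, with `M = A (A + I)⁻¹`:
the matrix `(Sig + I)⁻¹ - (A + I)⁻¹ + I` is positive definite, the matrix
`A + M (Sig - A) M` is positive definite, and
`(A + M (Sig - A) M)⁻¹ = A⁻¹ + 1 - ((Sig + I)⁻¹ - (A + I)⁻¹ + I)⁻¹`. -/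
theorem em_update_eq_scsi_update
    {d : ℕ} (A Sig : Matrix (Fin d) (Fin d) ℝ)
    (hA : A.PosDef) (hSig : Sig.PosDef)
    (M : Matrix (Fin d) (Fin d) ℝ) (hM : M = A * (A + 1)⁻¹) :
    ((Sig + 1)⁻¹ - (A + 1)⁻¹ + 1).PosDef ∧
      (A + M * (Sig - A) * M).PosDef ∧
      (A + M * (Sig - A) * M)⁻¹ =
        A⁻¹ + 1 - ((Sig + 1)⁻¹ - (A + 1)⁻¹ + 1)⁻¹ := by
  have hB : (A + 1).PosDef := hA.add .one
  have hS : (Sig + 1).PosDef := hSig.add .one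
  have hC : (A⁻¹ + 1).PosDef := hA.inv.add .one
  have hAdet : IsUnit A.det := hA.det_pos.ne'.isUnit
  have hBdet : IsUnit (A + 1).det := hB.det_pos.ne'.isUnit
  have hSdet : IsUnit (Sig + 1).det := hS.det_pos.ne'.isUnit
  have hAi : A * A⁻¹ = 1 := Matrix.mul_nonsing_inv _ hAdet
  have hBi : (A + 1) * (A + 1)⁻¹ = 1 := Matrix.mul_nonsing_inv _ hBdet
  have hiB : (A + 1)⁻¹ * (A + 1) = 1 := Matrix.nonsing_inv_mul _ hBdet
  have hSi : (Sig + 1) * (Sig + 1)⁻¹ = 1 := Matrix.mul_nonsing_inv _ hSdet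
  -- A commutes with (A+1)⁻¹
  have hswap : (A + 1) * A = A * (A + 1) := by noncomm_ring
  have hcomm : A * (A + 1)⁻¹ = (A + 1)⁻¹ * A := by
    calc A * (A + 1)⁻¹ = ((A + 1)⁻¹ * (A + 1)) * (A * (A + 1)⁻¹) := by rw [hiB, one_mul]
      _ = (A + 1)⁻¹ * (((A + 1) * A) * (A + 1)⁻¹) := by
          rw [mul_assoc, ← mul_assoc (A + 1) A]
      _ = (A + 1)⁻¹ * (A * ((A + 1) * (A + 1)⁻¹)) := by rw [hswap, mul_assoc]
      _ = (A + 1)⁻¹ * A := by rw [hBi, mul_one]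
  -- M = 1 - (A+1)⁻¹
  have hM1 : M = 1 - (A + 1)⁻¹ := by
    rw [hM]
    calc A * (A + 1)⁻¹ = ((A + 1) - 1) * (A + 1)⁻¹ := by rw [add_sub_cancel_right]
      _ = (A + 1) * (A + 1)⁻¹ - 1 * (A + 1)⁻¹ := by rw [sub_mul]
      _ = 1 - (A + 1)⁻¹ := by rw [hBi, one_mul]
  have hMH : M.IsHermitian := by
    rw [hM1]
    exact Matrix.isHermitian_one.sub hB.inv.isHermitian
  -- M * (A⁻¹ + 1) = 1 and (A⁻¹ + 1) * M = 1
  have hMC : M * (A⁻¹ + 1) = 1 := by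
    calc M * (A⁻¹ + 1) = A * (A + 1)⁻¹ * A⁻¹ + A * (A + 1)⁻¹ := by
          rw [hM, mul_add, mul_one]
      _ = (A + 1)⁻¹ * (A * A⁻¹) + A * (A + 1)⁻¹ := by rw [hcomm, mul_assoc]
      _ = (A + 1)⁻¹ + A * (A + 1)⁻¹ := by rw [hAi, mul_one]
      _ = (1 + A) * (A + 1)⁻¹ := by rw [add_mul, one_mul]
      _ = 1 := by rw [add_comm (1 : Matrix (Fin d) (Fin d) ℝ) A, hBi]
  have hCM : (A⁻¹ + 1) * M = 1 := mul_eq_one_comm.mp hMC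
  have hMpd : M.PosDef := by
    have e : (A⁻¹ + 1)⁻¹ = M := Matrix.inv_eq_right_inv hCM
    have := hC.inv
    rwa [e] at this
  -- M * (A + 1) = A and (A + 1) * M = A
  have hMB : M * (A + 1) = A := by
    rw [hM, mul_assoc, hiB, mul_one]
  have hBM : (A + 1) * M = A := by
    rw [hM, ← mul_assoc, hswap, mul_assoc, hBi, mul_one]
  -- the first matrix equals (Sig+1)⁻¹ + M
  have hNM : (Sig + 1)⁻¹ - (A + 1)⁻¹ + 1 = (Sig + 1)⁻¹ + M := by
    rw [hM1]; abel
  have hNpd : ((Sig + 1)⁻¹ - (A + 1)⁻¹ + 1).PosDef := by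
    rw [hNM]; exact hS.inv.add hMpd
  have hNdet : IsUnit ((Sig + 1)⁻¹ - (A + 1)⁻¹ + 1).det := hNpd.det_pos.ne'.isUnit
  have hNi : ((Sig + 1)⁻¹ - (A + 1)⁻¹ + 1) * ((Sig + 1)⁻¹ - (A + 1)⁻¹ + 1)⁻¹ = 1 :=
    Matrix.mul_nonsing_inv _ hNdet
  refine ⟨hNpd, ?_, ?_⟩
  · -- positivity of A + M (Sig - A) M via conjugation
    have hQ : (Sig + A⁻¹ + 1 + 1).PosDef := ((hSig.add hA.inv).add .one).add .one
    have hconj := posDef_conj_aux hQ hMpd.isUnit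
    rw [hMH.eq] at hconj
    have h2eq : M * (Sig + A⁻¹ + 1 + 1) * M = A + M * (Sig - A) * M := by
      have e1 : Sig + A⁻¹ + 1 + 1 = (Sig - A) + ((A⁻¹ + 1) + (A + 1)) := by abel
      calc M * (Sig + A⁻¹ + 1 + 1) * M
          = (M * (Sig - A) + (M * (A⁻¹ + 1) + M * (A + 1))) * M := by
            rw [e1, mul_add, mul_add]
        _ = (M * (Sig - A) + (1 + A)) * M := by rw [hMC, hMB]
        _ = M * (Sig - A) * M + (1 + A) * M := add_mul _ _ _
        _ = M * (Sig - A) * M + (A + 1) * M := by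
            rw [add_comm (1 : Matrix (Fin d) (Fin d) ℝ) A]
        _ = M * (Sig - A) * M + A := by rw [hBM]
        _ = A + M * (Sig - A) * M := add_comm _ _
    rw [← h2eq]
    exact hconj
  · -- the inverse identity
    apply Matrix.inv_eq_right_inv
    have hAMA : A - M * A = M := by
      have hMA : M * A = A * M := by
        rw [hM, mul_assoc, ← hcomm, ← mul_assoc]
      have : A * M + M = A := by
        calc A * M + M = (A + 1) * M := by rw [add_mul, one_mul]
          _ = A := hBM
      rw [hMA]
      exact (eq_sub_of_add_eq' this).symm
    -- keyA : Sig' * (A⁻¹ + 1) = 1 + M * (Sig + 1)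
    have keyA : (A + M * (Sig - A) * M) * (A⁻¹ + 1) = 1 + M * (Sig + 1) := by
      calc (A + M * (Sig - A) * M) * (A⁻¹ + 1)
          = A * (A⁻¹ + 1) + M * (Sig - A) * (M * (A⁻¹ + 1)) := by
            rw [add_mul, mul_assoc (M * (Sig - A))]
        _ = A * A⁻¹ + A + M * (Sig - A) := by rw [hMC, mul_one, mul_add, mul_one]
        _ = 1 + A + (M * Sig - M * A) := by rw [hAi, mul_sub]
        _ = 1 + M * Sig + (A - M * A) := by abel
        _ = 1 + M * Sig + M := by rw [hAMA]
        _ = 1 + M * (Sig + 1) := by rw [mul_add, mul_one]; abel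
    -- keyB : (M * (Sig + 1)) * N = Sig'
    have keyB : M * (Sig + 1) * ((Sig + 1)⁻¹ - (A + 1)⁻¹ + 1)
        = A + M * (Sig - A) * M := by
      rw [hNM]
      calc M * (Sig + 1) * ((Sig + 1)⁻¹ + M)
          = M * ((Sig + 1) * (Sig + 1)⁻¹) + M * (Sig + 1) * M := by
            rw [mul_add, mul_assoc M (Sig + 1)]
        _ = M + M * ((Sig - A) + (A + 1)) * M := by
            rw [hSi, mul_one]
            congr 2
            abel
        _ = M + (M * (Sig - A) * M + M * (A + 1) * M) := by
            rw [mul_add, add_mul]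
        _ = M + A * M + M * (Sig - A) * M := by rw [hMB]; abel
        _ = (A + 1) * M + M * (Sig - A) * M := by rw [add_mul, one_mul]; abel
        _ = A + M * (Sig - A) * M := by rw [hBM]
    calc (A + M * (Sig - A) * M) * (A⁻¹ + 1 - ((Sig + 1)⁻¹ - (A + 1)⁻¹ + 1)⁻¹)
        = (A + M * (Sig - A) * M) * (A⁻¹ + 1)
            - (A + M * (Sig - A) * M) * ((Sig + 1)⁻¹ - (A + 1)⁻¹ + 1)⁻¹ := by
          rw [mul_sub]
      _ = 1 + M * (Sig + 1)
            - M * (Sig + 1) * (((Sig + 1)⁻¹ - (A + 1)⁻¹ + 1) * ((Sig + 1)⁻¹ - (A + 1)⁻¹ + 1)⁻¹) := by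
          rw [keyA, ← keyB, mul_assoc]
      _ = 1 := by rw [hNi, mul_one]; abel
end

section
/- Let X be a Polish space (complete separable metric space with its Borel σ-algebra) and let μ and ν be Borel probability measures on X. Then the Kullback–Leibler divergence admits the Donsker–Varadhan variational representation: KL(μ ‖ ν) = sup over all bounded continuous functions f : X → ℝ of ( ∫ f dμ − log ∫ e^f dν ), where both sides take values in [0, ∞]. -/
open MeasureTheory
open scoped ENNReal Classical

/-- Kullback–Leibler divergence `KL(μ ‖ ν) = ∫ log (dμ/dν) dμ` when `μ ≪ ν` (and the
log-likelihood ratio is integrable, which for probability measures is equivalent to the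
integral being finite), and `KL(μ ‖ ν) = ∞` otherwise; valued in `[0, ∞]`. -/
noncomputable def klDiv {X : Type*} [MeasurableSpace X] (μ ν : Measure X) : ℝ≥0∞ :=
  if μ ≪ ν ∧ Integrable (llr μ ν) μ then ENNReal.ofReal (∫ x, llr μ ν x ∂μ) else ⊤

namespace DVAux

open Real Filter

variable {X : Type*} [MeasurableSpace X] {μ ν : Measure X}

/-- The Donsker–Varadhan functional. -/
noncomputable def D (μ ν : Measure X) (g : X → ℝ) : ℝ :=
  (∫ x, g x ∂μ) - Real.log (∫ x, Real.exp (g x) ∂ν)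

lemma integrable_of_bdd [IsFiniteMeasure μ] {g : X → ℝ} (hg : Measurable g)
    {c : ℝ} (hc : ∀ x, |g x| ≤ c) : Integrable g μ := by
  refine Integrable.mono' (integrable_const c) hg.aestronglyMeasurable
    (ae_of_all _ fun x => ?_)
  simpa [Real.norm_eq_abs] using hc x

lemma integrable_exp_of_bdd [IsFiniteMeasure μ] {g : X → ℝ} (hg : Measurable g)
    {c : ℝ} (hc : ∀ x, |g x| ≤ c) : Integrable (fun x => Real.exp (g x)) μ := by
  refine Integrable.mono' (integrable_const (Real.exp c)) (hg.exp).aestronglyMeasurable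
    (ae_of_all _ fun x => ?_)
  rw [Real.norm_eq_abs, abs_of_pos (exp_pos _)]
  exact exp_le_exp.2 ((le_abs_self _).trans (hc x))

lemma exp_neg_le_integral_exp [IsProbabilityMeasure ν] {g : X → ℝ} (hg : Measurable g)
    {c : ℝ} (hc : ∀ x, |g x| ≤ c) : Real.exp (-c) ≤ ∫ x, Real.exp (g x) ∂ν := by
  have h1 : Real.exp (-c) = ∫ _ , Real.exp (-c) ∂ν := by simp
  rw [h1]
  refine integral_mono (integrable_const _) (integrable_exp_of_bdd hg hc) fun x => ?_
  exact exp_le_exp.2 (neg_le_of_abs_le (hc x))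

/-- Nonnegativity of the KL divergence. -/
lemma integral_llr_nonneg [IsProbabilityMeasure μ] [IsProbabilityMeasure ν]
    (hμν : μ ≪ ν) (h_int : Integrable (llr μ ν) μ) : 0 ≤ ∫ x, llr μ ν x ∂μ := by
  have h_eq : ∫ x, llr μ ν x ∂μ = - ∫ x, llr ν μ x ∂μ := by
    rw [← integral_neg]
    refine integral_congr_ae ?_
    filter_upwards [neg_llr hμν] with x hx
    have : -llr μ ν x = llr ν μ x := hx
    linarith
  have h_int' : Integrable (llr ν μ) μ := (h_int.neg).congr (neg_llr hμν)
  have h_le : ∫ x, llr ν μ x ∂μ ≤ 0 := by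
    have hrn : Integrable (fun x => (ν.rnDeriv μ x).toReal) μ :=
      Measure.integrable_toReal_rnDeriv
    calc ∫ x, llr ν μ x ∂μ ≤ ∫ x, ((ν.rnDeriv μ x).toReal - 1) ∂μ := by
          refine integral_mono_ae h_int' (hrn.sub (integrable_const 1)) ?_
          filter_upwards [Measure.rnDeriv_pos' hμν, Measure.rnDeriv_lt_top ν μ] with x hx hx'
          exact Real.log_le_sub_one_of_pos (ENNReal.toReal_pos hx.ne' hx'.ne)
      _ = (∫ x, (ν.rnDeriv μ x).toReal ∂μ) - 1 := by
          rw [integral_sub hrn (integrable_const 1)]; simp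
      _ ≤ 0 := by
          have h := Measure.setIntegral_toReal_rnDeriv_le (μ := ν) (ν := μ)
            (s := Set.univ) (measure_ne_top ν _)
          rw [setIntegral_univ] at h
          simp only [measureReal_def, measure_univ, ENNReal.toReal_one] at h
          linarith
  linarith [h_eq ▸ neg_nonneg.2 h_le]

/-- The Gibbs inequality: `∫ f dμ - log ∫ e^f dν ≤ KL(μ‖ν)`. -/
lemma gibbs [IsProbabilityMeasure μ] [IsProbabilityMeasure ν]
    (hμν : μ ≪ ν) (h_int : Integrable (llr μ ν) μ) {f : X → ℝ}
    (hfμ : Integrable f μ) (hfν : Integrable (fun x => Real.exp (f x)) ν) :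
    D μ ν f ≤ ∫ x, llr μ ν x ∂μ := by
  set ν' := ν.tilted f with hν'
  have hP : IsProbabilityMeasure ν' := isProbabilityMeasure_tilted hfν
  have hνν' : ν ≪ ν' := absolutelyContinuous_tilted hfν
  have hμν' : μ ≪ ν' := hμν.trans hνν'
  have h_int' : Integrable (llr μ ν') μ :=
    integrable_llr_tilted_right hμν hfμ h_int hfν
  have h_eq : ∫ x, llr μ ν' x ∂μ
      = ∫ x, llr μ ν x ∂μ - ∫ x, f x ∂μ + Real.log (∫ x, Real.exp (f x) ∂ν) :=
    integral_llr_tilted_right hμν hfμ hfν h_int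
  have h0 : 0 ≤ ∫ x, llr μ ν' x ∂μ := integral_llr_nonneg hμν' h_int'
  rw [h_eq] at h0
  simp only [D]
  linarith

lemma abs_clamp_le {c t : ℝ} (hc : 0 ≤ c) : |max (-c) (min c t)| ≤ c := by
  rw [abs_le]
  constructor
  · exact le_max_left _ _
  · exact max_le (by linarith) (min_le_left _ _)

lemma clamp_lipschitz {c s t : ℝ} : |max (-c) (min c s) - max (-c) (min c t)| ≤ |s - t| := by
  calc |max (-c) (min c s) - max (-c) (min c t)|
      = |max (min c s) (-c) - max (min c t) (-c)| := by rw [max_comm (-c), max_comm (-c)]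
    _ ≤ |min c s - min c t| := abs_max_sub_max_le_abs _ _ _
    _ ≤ max |c - c| |s - t| := abs_min_sub_min_le_max _ _ _ _
    _ ≤ |s - t| := by simp

lemma exp_sub_exp_le {a b c : ℝ} (ha : a ≤ c) (hb : b ≤ c) :
    Real.exp a - Real.exp b ≤ Real.exp c * |a - b| := by
  rcases le_total a b with h | h
  · have : Real.exp a ≤ Real.exp b := Real.exp_le_exp.2 h
    have := abs_nonneg (a - b)
    nlinarith [Real.exp_pos c]
  · have h1 : 1 + (b - a) ≤ Real.exp (b - a) := by linarith [Real.add_one_le_exp (b-a)]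
    have h2 : Real.exp b = Real.exp a * Real.exp (b - a) := by
      rw [← Real.exp_add]; ring_nf
    have h3 : Real.exp a - Real.exp b ≤ Real.exp a * (a - b) := by
      rw [h2]; nlinarith [Real.exp_pos a]
    have h4 : Real.exp a * (a - b) ≤ Real.exp c * (a - b) := by
      have := Real.exp_le_exp.2 ha
      nlinarith
    rw [abs_of_nonneg (by linarith : (0:ℝ) ≤ a - b)]
    linarith

section Approx

variable {X : Type*} [TopologicalSpace X] [PolishSpace X] [MeasurableSpace X] [BorelSpace X]
variable (μ ν : Measure X) [IsProbabilityMeasure μ] [IsProbabilityMeasure ν]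

lemma exists_bcf_approx {g : X → ℝ} (hg : Measurable g) {c : ℝ} (hc0 : 0 ≤ c)
    (hc : ∀ x, |g x| ≤ c) {ε : ℝ} (hε : 0 < ε) :
    ∃ f : BoundedContinuousFunction X ℝ, D μ ν g ≤ D μ ν f + ε := by
  letI := TopologicalSpace.upgradeIsCompletelyMetrizable X
  have hden : (0:ℝ) < 1 + Real.exp (2*c) := by positivity
  set δ : ℝ := ε / (1 + Real.exp (2*c)) with hδdef
  have hδ : 0 < δ := div_pos hε hden
  have hgρ : Integrable g (μ + ν) := integrable_of_bdd hg hc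
  obtain ⟨h, hh, hh_int⟩ := hgρ.exists_boundedContinuous_integral_sub_le hδ
  -- the clamped function
  let f : BoundedContinuousFunction X ℝ :=
    BoundedContinuousFunction.mkOfBound
      ⟨fun x => max (-c) (min c (h x)), continuous_const.max (continuous_const.min h.continuous)⟩
      (2*c)
      (fun x y => by
        simp only [ContinuousMap.coe_mk, Real.dist_eq]
        have h1 := abs_clamp_le (t := h x) hc0
        have h2 := abs_clamp_le (t := h y) hc0
        have := abs_sub_abs_le_abs_sub (max (-c) (min c (h x))) (max (-c) (min c (h y)))
        calc |max (-c) (min c (h x)) - max (-c) (min c (h y))|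
            ≤ |max (-c) (min c (h x))| + |max (-c) (min c (h y))| := abs_sub _ _
          _ ≤ 2*c := by linarith)
  have hf_apply : ∀ x, f x = max (-c) (min c (h x)) := fun x => rfl
  have hfc : ∀ x, |f x| ≤ c := fun x => by rw [hf_apply]; exact abs_clamp_le hc0
  have hkey : ∀ x, |f x - g x| ≤ |h x - g x| := by
    intro x
    have hgx : max (-c) (min c (g x)) = g x := by
      rcases abs_le.1 (hc x) with ⟨h1, h2⟩
      rw [min_eq_right h2, max_eq_right h1]
    calc |f x - g x| = |max (-c) (min c (h x)) - max (-c) (min c (g x))| := by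
          rw [hf_apply, hgx]
      _ ≤ |h x - g x| := clamp_lipschitz
  -- integral bounds for |f - g|
  have hgμ : Integrable g μ := integrable_of_bdd hg hc
  have hgν : Integrable g ν := integrable_of_bdd hg hc
  have hFρ : Integrable (fun x => ‖g x - h x‖) (μ + ν) := (hgρ.sub hh_int).norm
  have hFμ : Integrable (fun x => ‖g x - h x‖) μ := (integrable_add_measure.1 hFρ).1
  have hFν : Integrable (fun x => ‖g x - h x‖) ν := (integrable_add_measure.1 hFρ).2
  have hsplit : ∫ x, ‖g x - h x‖ ∂μ + ∫ x, ‖g x - h x‖ ∂ν = ∫ x, ‖g x - h x‖ ∂(μ + ν) :=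
    (integral_add_measure hFμ hFν).symm
  have hμδ : ∫ x, ‖g x - h x‖ ∂μ ≤ δ := by
    have h2 : 0 ≤ ∫ x, ‖g x - h x‖ ∂ν := integral_nonneg fun x => norm_nonneg _
    linarith [hh, hsplit]
  have hνδ : ∫ x, ‖g x - h x‖ ∂ν ≤ δ := by
    have h2 : 0 ≤ ∫ x, ‖g x - h x‖ ∂μ := integral_nonneg fun x => norm_nonneg _
    linarith [hh, hsplit]
  have hfμ : Integrable (⇑f) μ := f.integrable μ
  have hfν : Integrable (⇑f) ν := f.integrable ν
  have hfg_abs_μ : Integrable (fun x => |f x - g x|) μ := (hfμ.sub hgμ).abs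
  have hfg_abs_ν : Integrable (fun x => |f x - g x|) ν := (hfν.sub hgν).abs
  have hfgμ : ∫ x, |f x - g x| ∂μ ≤ δ :=
    le_trans (integral_mono hfg_abs_μ hFμ fun x => by
      rw [Real.norm_eq_abs, abs_sub_comm (g x)]; exact hkey x) hμδ
  have hfgν : ∫ x, |f x - g x| ∂ν ≤ δ :=
    le_trans (integral_mono hfg_abs_ν hFν fun x => by
      rw [Real.norm_eq_abs, abs_sub_comm (g x)]; exact hkey x) hνδ
  -- estimate 1 : ∫ g dμ ≤ ∫ f dμ + δ
  have est1 : ∫ x, g x ∂μ ≤ ∫ x, f x ∂μ + δ := by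
    have h1 : ∫ x, (g x - f x) ∂μ ≤ ∫ x, |f x - g x| ∂μ :=
      integral_mono (hgμ.sub hfμ) hfg_abs_μ fun x => by
        rw [abs_sub_comm]; exact le_abs_self _
    rw [integral_sub hgμ hfμ] at h1
    linarith
  -- estimate 2 : ∫ e^f dν ≤ ∫ e^g dν + e^c δ
  have hefν : Integrable (fun x => Real.exp (f x)) ν :=
    integrable_exp_of_bdd (map_continuous f).measurable hfc
  have hegν : Integrable (fun x => Real.exp (g x)) ν := integrable_exp_of_bdd hg hc
  have est2 : ∫ x, Real.exp (f x) ∂ν ≤ ∫ x, Real.exp (g x) ∂ν + Real.exp c * δ := by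
    have h1 : ∫ x, (Real.exp (f x) - Real.exp (g x)) ∂ν
        ≤ ∫ x, Real.exp c * |f x - g x| ∂ν := by
      refine integral_mono (hefν.sub hegν) (hfg_abs_ν.const_mul _) fun x => ?_
      exact exp_sub_exp_le ((le_abs_self _).trans (hfc x)) ((le_abs_self _).trans (hc x))
    rw [integral_sub hefν hegν, integral_const_mul] at h1
    have h2 : Real.exp c * ∫ x, |f x - g x| ∂ν ≤ Real.exp c * δ :=
      mul_le_mul_of_nonneg_left hfgν (Real.exp_pos c).le
    linarith
  -- estimate 3 : log ∫ e^f dν ≤ log ∫ e^g dν + e^{2c} δ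
  have hA : Real.exp (-c) ≤ ∫ x, Real.exp (g x) ∂ν := exp_neg_le_integral_exp hg hc
  have hApos : (0:ℝ) < ∫ x, Real.exp (g x) ∂ν := lt_of_lt_of_le (Real.exp_pos _) hA
  have hBpos : (0:ℝ) < ∫ x, Real.exp (f x) ∂ν := integral_exp_pos hefν
  have est3 : Real.log (∫ x, Real.exp (f x) ∂ν)
      ≤ Real.log (∫ x, Real.exp (g x) ∂ν) + Real.exp (2*c) * δ := by
    set A := ∫ x, Real.exp (g x) ∂ν
    set B := ∫ x, Real.exp (f x) ∂ν
    have h1 : Real.log B ≤ Real.log (A + Real.exp c * δ) :=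
      Real.log_le_log hBpos est2
    have h2 : Real.log (A + Real.exp c * δ) - Real.log A
        = Real.log ((A + Real.exp c * δ) / A) := by
      rw [Real.log_div (by positivity) hApos.ne']
    have h3 : Real.log ((A + Real.exp c * δ) / A) ≤ (A + Real.exp c * δ) / A - 1 :=
      Real.log_le_sub_one_of_pos (by positivity)
    have h4 : (A + Real.exp c * δ) / A - 1 = (Real.exp c * δ) / A := by
      field_simp
      ring
    have h5 : (Real.exp c * δ) / A ≤ (Real.exp c * δ) / Real.exp (-c) :=
      div_le_div_of_nonneg_left (by positivity) (Real.exp_pos _) hA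
    have h6 : (Real.exp c * δ) / Real.exp (-c) = Real.exp (2*c) * δ := by
      rw [Real.exp_neg, div_inv_eq_mul, two_mul, Real.exp_add]
      ring
    linarith
  refine ⟨f, ?_⟩
  have hδε : δ * (1 + Real.exp (2*c)) = ε := by
    rw [hδdef]; field_simp
  simp only [D]
  nlinarith [est1, est3]

lemma ofReal_D_le_iSup {g : X → ℝ} (hg : Measurable g) {c : ℝ} (hc0 : 0 ≤ c)
    (hc : ∀ x, |g x| ≤ c) :
    ENNReal.ofReal (D μ ν g) ≤ ⨆ f : BoundedContinuousFunction X ℝ,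
      ENNReal.ofReal ((∫ x, f x ∂μ) - Real.log (∫ x, Real.exp (f x) ∂ν)) := by
  refine ENNReal.le_of_forall_pos_le_add fun ε hε _ => ?_
  obtain ⟨f, hf⟩ := exists_bcf_approx μ ν hg hc0 hc (show (0:ℝ) < ε by exact_mod_cast hε)
  calc ENNReal.ofReal (D μ ν g) ≤ ENNReal.ofReal (D μ ν ⇑f + ε) := ENNReal.ofReal_le_ofReal hf
    _ ≤ ENNReal.ofReal (D μ ν ⇑f) + ENNReal.ofReal ε := ENNReal.ofReal_add_le
    _ ≤ (⨆ f : BoundedContinuousFunction X ℝ,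
          ENNReal.ofReal ((∫ x, f x ∂μ) - Real.log (∫ x, Real.exp (f x) ∂ν))) + ε := by
        rw [ENNReal.ofReal_coe_nnreal]
        gcongr
        exact le_iSup_of_le f (le_of_eq rfl)

lemma iSup_eq_top_of_unbounded
    (H : ∀ M : ℝ, ∃ g : X → ℝ, Measurable g ∧ ∃ c, 0 ≤ c ∧ (∀ x, |g x| ≤ c) ∧ M ≤ D μ ν g) :
    (⨆ f : BoundedContinuousFunction X ℝ,
      ENNReal.ofReal ((∫ x, f x ∂μ) - Real.log (∫ x, Real.exp (f x) ∂ν))) = ⊤ := by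
  set S := ⨆ f : BoundedContinuousFunction X ℝ,
      ENNReal.ofReal ((∫ x, f x ∂μ) - Real.log (∫ x, Real.exp (f x) ∂ν)) with hS
  by_contra hne
  obtain ⟨g, hg, c, hc0, hc, hM⟩ := H (S.toReal + 1)
  have h1 : ENNReal.ofReal (S.toReal + 1) ≤ S :=
    le_trans (ENNReal.ofReal_le_ofReal hM) (ofReal_D_le_iSup μ ν hg hc0 hc)
  rw [ENNReal.ofReal_le_iff_le_toReal hne] at h1
  linarith

end Approx

section Gseq

variable {X : Type*} [MeasurableSpace X]
variable (μ ν : Measure X) [IsProbabilityMeasure μ] [IsProbabilityMeasure ν]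

/-- Truncated log-likelihood ratio, cut off to `-n` where the density vanishes. -/
noncomputable def gseq (n : ℕ) (x : X) : ℝ :=
  if μ.rnDeriv ν x = 0 then -(n:ℝ) else max (-(n:ℝ)) (min (n:ℝ) (llr μ ν x))

lemma gseq_measurable (n : ℕ) : Measurable (gseq μ ν n) := by
  refine Measurable.ite ((Measure.measurable_rnDeriv μ ν) (measurableSet_singleton 0))
    measurable_const ?_
  exact measurable_const.max (measurable_const.min (measurable_llr μ ν))

lemma gseq_abs_le (n : ℕ) : ∀ x, |gseq μ ν n x| ≤ (n:ℝ) := by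
  intro x
  unfold gseq
  split_ifs with h
  · simp
  · exact abs_clamp_le (Nat.cast_nonneg n)

lemma clamp_abs_le_abs {n t : ℝ} (hn : 0 ≤ n) : |max (-n) (min n t)| ≤ |t| := by
  rcases le_total t (-n) with h1 | h1
  · rw [min_eq_right (h1.trans (by linarith)), max_eq_left h1]
    rw [abs_neg, abs_of_nonneg hn, abs_of_nonpos (h1.trans (by linarith))]
    linarith
  · rcases le_total t n with h2 | h2
    · rw [min_eq_right h2, max_eq_right h1]
    · rw [min_eq_left h2, max_eq_right (by linarith)]
      rw [abs_of_nonneg hn, abs_of_nonneg (hn.trans h2)]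
      exact h2

lemma gseq_integral_exp_le (hac : μ ≪ ν) (n : ℕ) :
    ∫ x, Real.exp (gseq μ ν n x) ∂ν ≤ 1 + Real.exp (-(n:ℝ)) := by
  have hbound : ∀ᵐ x ∂ν, Real.exp (gseq μ ν n x)
      ≤ Real.exp (-(n:ℝ)) + (μ.rnDeriv ν x).toReal := by
    filter_upwards [Measure.rnDeriv_lt_top μ ν] with x hx
    unfold gseq
    split_ifs with h0
    · simp [ENNReal.toReal_nonneg]
    · have h1 : max (-(n:ℝ)) (min (n:ℝ) (llr μ ν x)) ≤ max (-(n:ℝ)) (llr μ ν x) :=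
        max_le_max le_rfl (min_le_right _ _)
      have h2 : Real.exp (max (-(n:ℝ)) (llr μ ν x))
          = max (Real.exp (-(n:ℝ))) (Real.exp (llr μ ν x)) := by
        rcases le_total (-(n:ℝ)) (llr μ ν x) with h | h
        · rw [max_eq_right h, max_eq_right (Real.exp_le_exp.2 h)]
        · rw [max_eq_left h, max_eq_left (Real.exp_le_exp.2 h)]
      have h3 : Real.exp (llr μ ν x) = (μ.rnDeriv ν x).toReal := by
        rw [llr, Real.exp_log (ENNReal.toReal_pos h0 hx.ne)]
      calc Real.exp (max (-(n:ℝ)) (min (n:ℝ) (llr μ ν x)))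
          ≤ Real.exp (max (-(n:ℝ)) (llr μ ν x)) := Real.exp_le_exp.2 h1
        _ = max (Real.exp (-(n:ℝ))) (Real.exp (llr μ ν x)) := h2
        _ ≤ Real.exp (-(n:ℝ)) + Real.exp (llr μ ν x) :=
            max_le (le_add_of_nonneg_right (Real.exp_pos _).le)
              (le_add_of_nonneg_left (Real.exp_pos _).le)
        _ = Real.exp (-(n:ℝ)) + (μ.rnDeriv ν x).toReal := by rw [h3]
  have h_int : Integrable (fun x => Real.exp (gseq μ ν n x)) ν :=
    integrable_exp_of_bdd (gseq_measurable μ ν n) (gseq_abs_le μ ν n)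
  have h_int2 : Integrable (fun x => Real.exp (-(n:ℝ)) + (μ.rnDeriv ν x).toReal) ν :=
    (integrable_const _).add Measure.integrable_toReal_rnDeriv
  calc ∫ x, Real.exp (gseq μ ν n x) ∂ν
      ≤ ∫ x, (Real.exp (-(n:ℝ)) + (μ.rnDeriv ν x).toReal) ∂ν :=
        integral_mono_ae h_int h_int2 hbound
    _ = Real.exp (-(n:ℝ)) + ∫ x, (μ.rnDeriv ν x).toReal ∂ν := by
        rw [integral_add (integrable_const _) Measure.integrable_toReal_rnDeriv]
        simp
    _ ≤ 1 + Real.exp (-(n:ℝ)) := by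
        rw [Measure.integral_toReal_rnDeriv hac]
        simp [add_comm]

lemma gseq_log_le (hac : μ ≪ ν) (n : ℕ) :
    Real.log (∫ x, Real.exp (gseq μ ν n x) ∂ν) ≤ Real.exp (-(n:ℝ)) := by
  have hpos : (0:ℝ) < ∫ x, Real.exp (gseq μ ν n x) ∂ν :=
    integral_exp_pos (integrable_exp_of_bdd (gseq_measurable μ ν n) (gseq_abs_le μ ν n))
  calc Real.log (∫ x, Real.exp (gseq μ ν n x) ∂ν)
      ≤ Real.log (1 + Real.exp (-(n:ℝ))) :=
        Real.log_le_log hpos (gseq_integral_exp_le μ ν hac n)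
    _ ≤ Real.exp (-(n:ℝ)) := by
        have := Real.log_le_sub_one_of_pos
          (show (0:ℝ) < 1 + Real.exp (-(n:ℝ)) by positivity)
        linarith

lemma gseq_integral_tendsto (hac : μ ≪ ν) (h_int : Integrable (llr μ ν) μ) :
    Filter.Tendsto (fun n : ℕ => ∫ x, gseq μ ν n x ∂μ) Filter.atTop
      (nhds (∫ x, llr μ ν x ∂μ)) := by
  refine tendsto_integral_of_dominated_convergence (fun x => |llr μ ν x|)
    (fun n => (gseq_measurable μ ν n).aestronglyMeasurable) h_int.abs ?_ ?_
  · intro n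
    filter_upwards [Measure.rnDeriv_pos hac] with x hx
    rw [Real.norm_eq_abs]
    unfold gseq
    rw [if_neg hx.ne']
    exact clamp_abs_le_abs (Nat.cast_nonneg n)
  · filter_upwards [Measure.rnDeriv_pos hac] with x hx
    refine tendsto_atTop_of_eventually_const (i₀ := ⌈|llr μ ν x|⌉₊) fun n hn => ?_
    unfold gseq
    rw [if_neg hx.ne']
    have h1 : |llr μ ν x| ≤ (n:ℝ) := le_trans (Nat.le_ceil _) (Nat.cast_le.2 hn)
    obtain ⟨ha, hb⟩ := abs_le.1 h1
    rw [min_eq_right hb, max_eq_right ha]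

lemma gseq_integral_unbounded (hac : μ ≪ ν) (h_nint : ¬ Integrable (llr μ ν) μ) (M : ℝ) :
    ∃ n : ℕ, M ≤ ∫ x, gseq μ ν n x ∂μ := by
  set p : X → ℝ := fun x => max (llr μ ν x) 0 with hp
  set m : X → ℝ := fun x => max (-llr μ ν x) 0 with hm
  have hp_meas : Measurable p := (measurable_llr μ ν).max measurable_const
  have hm_meas : Measurable m := (measurable_llr μ ν).neg.max measurable_const
  have hp_nonneg : ∀ x, 0 ≤ p x := fun x => le_max_right _ _
  have hm_nonneg : ∀ x, 0 ≤ m x := fun x => le_max_right _ _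
  -- m is integrable
  have hm_int : Integrable m μ := by
    refine Integrable.mono' (g := fun x => (ν.rnDeriv μ x).toReal)
      Measure.integrable_toReal_rnDeriv hm_meas.aestronglyMeasurable ?_
    filter_upwards [exp_neg_llr hac] with x hx
    rw [Real.norm_eq_abs, abs_of_nonneg (hm_nonneg x), ← hx]
    refine max_le ?_ (Real.exp_pos _).le
    linarith [Real.add_one_le_exp (-llr μ ν x)]
  set C := ∫ x, m x ∂μ with hC
  -- the positive part has infinite lintegral
  have htop : ∫⁻ x, ENNReal.ofReal (p x) ∂μ = ⊤ := by
    by_contra h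
    have hp_int : Integrable p μ := by
      refine ⟨hp_meas.aestronglyMeasurable, ?_⟩
      rw [hasFiniteIntegral_iff_norm]
      refine lt_of_le_of_ne (le_top) ?_
      convert h using 1
      refine lintegral_congr fun x => ?_
      rw [Real.norm_eq_abs, abs_of_nonneg (hp_nonneg x)]
    refine h_nint ?_
    have : llr μ ν = fun x => p x - m x := by
      ext x
      rcases le_total (llr μ ν x) 0 with h1 | h1
      · simp [hp, hm, max_eq_right h1, max_eq_left (by linarith : (0:ℝ) ≤ -llr μ ν x)]
      · simp [hp, hm, max_eq_left h1, max_eq_right (by linarith : -llr μ ν x ≤ 0)]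
    rw [this]
    exact hp_int.sub hm_int
  -- truncated integrals are unbounded
  have hq_int : ∀ n : ℕ, Integrable (fun x => min (n:ℝ) (p x)) μ := by
    intro n
    refine integrable_of_bdd (measurable_const.min hp_meas) (c := (n:ℝ)) fun x => ?_
    rw [abs_of_nonneg (le_min (Nat.cast_nonneg n) (hp_nonneg x))]
    exact min_le_left _ _
  have hIn_ne_top : ∀ n : ℕ, ∫⁻ x, ENNReal.ofReal (min (n:ℝ) (p x)) ∂μ ≠ ⊤ := by
    intro n
    refine ne_of_lt (lt_of_le_of_lt
      (lintegral_mono (g := fun _ => ENNReal.ofReal (n:ℝ))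
        fun x => ENNReal.ofReal_le_ofReal (min_le_left _ _)) ?_)
    rw [lintegral_const]
    simp [ENNReal.ofReal_lt_top]
  have h_sup : (⨆ n : ℕ, ∫⁻ x, ENNReal.ofReal (min (n:ℝ) (p x)) ∂μ)
      = ∫⁻ x, ENNReal.ofReal (p x) ∂μ := by
    rw [← lintegral_iSup (fun n => (measurable_const.min hp_meas).ennreal_ofReal) ?_]
    · refine lintegral_congr fun x => ?_
      refine le_antisymm (iSup_le fun n => ENNReal.ofReal_le_ofReal (min_le_right _ _)) ?_
      refine le_iSup_of_le ⌈p x⌉₊ (ENNReal.ofReal_le_ofReal ?_)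
      exact le_min (Nat.le_ceil _) le_rfl
    · intro i j hij x
      exact ENNReal.ofReal_le_ofReal (min_le_min (Nat.cast_le.2 hij) le_rfl)
  -- choose n
  obtain ⟨n, hn⟩ : ∃ n : ℕ, ENNReal.ofReal (M + C) < ∫⁻ x, ENNReal.ofReal (min (n:ℝ) (p x)) ∂μ := by
    rw [← lt_iSup_iff, h_sup, htop]
    exact ENNReal.ofReal_lt_top
  refine ⟨n, ?_⟩
  have h_eq : ∫ x, min (n:ℝ) (p x) ∂μ
      = (∫⁻ x, ENNReal.ofReal (min (n:ℝ) (p x)) ∂μ).toReal := by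
    refine integral_eq_lintegral_of_nonneg_ae (ae_of_all _ fun x => ?_)
      (measurable_const.min hp_meas).aestronglyMeasurable
    exact le_min (Nat.cast_nonneg n) (hp_nonneg x)
  have hMC : M + C ≤ ∫ x, min (n:ℝ) (p x) ∂μ := by
    rw [h_eq]
    exact (ENNReal.ofReal_le_iff_le_toReal (hIn_ne_top n)).1 hn.le
  -- lower bound for the integral of gseq n
  have h_lb : ∫ x, (min (n:ℝ) (p x) - m x) ∂μ ≤ ∫ x, gseq μ ν n x ∂μ := by
    refine integral_mono_ae ((hq_int n).sub hm_int)
      (integrable_of_bdd (gseq_measurable μ ν n) (gseq_abs_le μ ν n)) ?_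
    filter_upwards [Measure.rnDeriv_pos hac] with x hx
    unfold gseq
    rw [if_neg hx.ne']
    have h1 : min (n:ℝ) (llr μ ν x) ≤ max (-(n:ℝ)) (min (n:ℝ) (llr μ ν x)) := le_max_right _ _
    have h2 : min (n:ℝ) (p x) - m x ≤ min (n:ℝ) (llr μ ν x) := by
      rcases le_total (llr μ ν x) 0 with h3 | h3
      · have : p x = 0 := max_eq_right h3
        have hmx : m x = -llr μ ν x := max_eq_left (by linarith)
        rw [this, hmx, min_eq_right (Nat.cast_nonneg n),
          min_eq_right (h3.trans (Nat.cast_nonneg n))]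
        linarith
      · have : p x = llr μ ν x := max_eq_left h3
        have hmx : m x = 0 := max_eq_right (by linarith)
        rw [this, hmx]
        linarith
    linarith
  rw [integral_sub (hq_int n) hm_int] at h_lb
  linarith

end Gseq

end DVAux

/-- **Donsker–Varadhan variational representation of the KL divergence** on a Polish
space: `KL(μ ‖ ν) = sup_{f bounded continuous} ( ∫ f dμ - log ∫ e^f dν )`. -/
theorem klDiv_eq_donsker_varadhan
    {X : Type*} [TopologicalSpace X] [PolishSpace X] [MeasurableSpace X] [BorelSpace X]
    (μ ν : Measure X) [IsProbabilityMeasure μ] [IsProbabilityMeasure ν] :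
    klDiv μ ν = ⨆ f : BoundedContinuousFunction X ℝ,
      ENNReal.ofReal ((∫ x, f x ∂μ) - Real.log (∫ x, Real.exp (f x) ∂ν)) := by
  by_cases hac : μ ≪ ν
  · by_cases hint : Integrable (llr μ ν) μ
    · rw [klDiv, if_pos ⟨hac, hint⟩]
      refine le_antisymm ?_ ?_
      · -- `≤` : approximate the truncated llr
        refine ENNReal.le_of_forall_pos_le_add fun ε hε _ => ?_
        have hε' : (0:ℝ) < (ε:ℝ) := by exact_mod_cast hε
        have h1 : ∀ᶠ n : ℕ in Filter.atTop,
            (∫ x, llr μ ν x ∂μ) - (ε:ℝ)/2 < ∫ x, DVAux.gseq μ ν n x ∂μ :=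
          (DVAux.gseq_integral_tendsto μ ν hac hint).eventually_const_lt (by linarith)
        have h2 : ∀ᶠ n : ℕ in Filter.atTop, Real.exp (-(n:ℝ)) < (ε:ℝ)/2 := by
          have h3 : Filter.Tendsto (fun n : ℕ => Real.exp (-(n:ℝ))) Filter.atTop (nhds 0) :=
            Real.tendsto_exp_atBot.comp
              (Filter.tendsto_neg_atBot_iff.2 tendsto_natCast_atTop_atTop)
          exact h3.eventually_lt_const (by linarith)
        obtain ⟨n, hn1, hn2⟩ := (h1.and h2).exists
        have hD : (∫ x, llr μ ν x ∂μ) - (ε:ℝ) ≤ DVAux.D μ ν (DVAux.gseq μ ν n) := by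
          have hlog := DVAux.gseq_log_le μ ν hac n
          simp only [DVAux.D]
          linarith
        calc ENNReal.ofReal (∫ x, llr μ ν x ∂μ)
            ≤ ENNReal.ofReal (DVAux.D μ ν (DVAux.gseq μ ν n) + (ε:ℝ)) :=
              ENNReal.ofReal_le_ofReal (by linarith)
          _ ≤ ENNReal.ofReal (DVAux.D μ ν (DVAux.gseq μ ν n)) + ENNReal.ofReal (ε:ℝ) :=
              ENNReal.ofReal_add_le
          _ ≤ (⨆ f : BoundedContinuousFunction X ℝ,
                ENNReal.ofReal ((∫ x, f x ∂μ) - Real.log (∫ x, Real.exp (f x) ∂ν))) + ε := by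
              rw [ENNReal.ofReal_coe_nnreal]
              gcongr
              exact DVAux.ofReal_D_le_iSup μ ν (DVAux.gseq_measurable μ ν n)
                (Nat.cast_nonneg n) (DVAux.gseq_abs_le μ ν n)
      · -- `≥` : the Gibbs inequality
        refine iSup_le fun f => ENNReal.ofReal_le_ofReal ?_
        have hexp : Integrable (fun x => Real.exp (f x)) ν :=
          DVAux.integrable_exp_of_bdd (map_continuous f).measurable (c := ‖f‖) fun x => by
            rw [← Real.norm_eq_abs]; exact f.norm_coe_le_norm x
        exact DVAux.gibbs hac hint (f.integrable μ) hexp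
    · rw [klDiv, if_neg (fun h => hint h.2)]
      refine (DVAux.iSup_eq_top_of_unbounded μ ν fun M => ?_).symm
      obtain ⟨n, hn⟩ := DVAux.gseq_integral_unbounded μ ν hac hint (M + 1)
      refine ⟨DVAux.gseq μ ν n, DVAux.gseq_measurable μ ν n,
        (n:ℝ), Nat.cast_nonneg n, DVAux.gseq_abs_le μ ν n, ?_⟩
      have hlog := DVAux.gseq_log_le μ ν hac n
      have hexp1 : Real.exp (-(n:ℝ)) ≤ 1 := by
        rw [Real.exp_le_one_iff]
        simp
      simp only [DVAux.D]
      linarith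
  · rw [klDiv, if_neg (fun h => hac h.1)]
    refine (DVAux.iSup_eq_top_of_unbounded μ ν fun M => ?_).symm
    obtain ⟨s, hνs, hμs⟩ : ∃ s, ν s = 0 ∧ μ s ≠ 0 := by
      by_contra h
      push_neg at h
      exact hac (Measure.AbsolutelyContinuous.mk fun s _ hs => h s hs)
    set S := toMeasurable ν s with hSdef
    have hSm : MeasurableSet S := measurableSet_toMeasurable ν s
    have hνS : ν S = 0 := by rw [hSdef, measure_toMeasurable]; exact hνs
    have hμS : μ S ≠ 0 := fun h =>
      hμs (le_antisymm (h ▸ measure_mono (subset_toMeasurable ν s)) zero_le)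
    have hcpos : 0 < (μ S).toReal := ENNReal.toReal_pos hμS (measure_ne_top μ S)
    obtain ⟨n, hn⟩ := exists_nat_ge (M / (μ S).toReal)
    refine ⟨S.indicator (fun _ => (n:ℝ)), measurable_const.indicator hSm,
      (n:ℝ), Nat.cast_nonneg n, fun x => ?_, ?_⟩
    · by_cases hx : x ∈ S
      · rw [Set.indicator_of_mem hx, abs_of_nonneg (Nat.cast_nonneg n)]
      · rw [Set.indicator_of_notMem hx]
        simp
    · have hint1 : ∫ x, S.indicator (fun _ => (n:ℝ)) x ∂μ = (μ S).toReal * n := by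
        rw [integral_indicator_const _ hSm]
        simp [smul_eq_mul, measureReal_def]
      have hint2 : ∫ x, Real.exp (S.indicator (fun _ => (n:ℝ)) x) ∂ν = 1 := by
        have hae : ∀ᵐ x ∂ν, Real.exp (S.indicator (fun _ => (n:ℝ)) x) = 1 := by
          filter_upwards [measure_eq_zero_iff_ae_notMem.1 hνS] with x hx
          rw [Set.indicator_of_notMem hx, Real.exp_zero]
        rw [integral_congr_ae hae]
        simp
      simp only [DVAux.D, hint1, hint2, Real.log_one, sub_zero]
      rw [div_le_iff₀ hcpos] at hn
      linarith
end

section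
/- Let X be a Polish space and let μ be a Borel probability measure on X. Then the map ν ↦ KL(μ ‖ ν) on Borel probability measures on X is lower semicontinuous with respect to weak convergence: if ν_n converges weakly to ν, then KL(μ ‖ ν) ≤ liminf_{n→∞} KL(μ ‖ ν_n). -/
open MeasureTheory Filter
open scoped ENNReal Classical

namespace KLProof
open Real

variable {X : Type*} [MeasurableSpace X] {μ ν : Measure X}

/-- The Donsker–Varadhan-type functional `∫ f dμ - ∫ exp f dν + 1`. -/
noncomputable def D (μ ν : Measure X) (f : X → ℝ) : ℝ :=
  ∫ x, f x ∂μ - ∫ x, exp (f x) ∂ν + 1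

lemma key_ineq {t s : ℝ} (ht : 0 ≤ t) : s * t - exp s ≤ t * log t - t := by
  rcases eq_or_lt_of_le ht with h | h
  · subst h
    simpa using (exp_pos s).le
  · have h1 : (s - log t) + 1 ≤ exp (s - log t) := add_one_le_exp _
    have h2 : t * ((s - log t) + 1) ≤ t * exp (s - log t) :=
      mul_le_mul_of_nonneg_left h1 ht
    have h3 : t * exp (s - log t) = exp s := by
      rw [exp_sub, exp_log h]; field_simp
    nlinarith

lemma exp_lip {a b B : ℝ} (ha : a ≤ B) (hb : b ≤ B) : |exp a - exp b| ≤ exp B * |a - b| := by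
  wlog hab : b ≤ a generalizing a b
  · rw [abs_sub_comm, abs_sub_comm a b]; exact this hb ha (le_of_not_ge hab)
  have h1 : exp a * ((b - a) + 1) ≤ exp a * exp (b - a) :=
    mul_le_mul_of_nonneg_left (add_one_le_exp _) (exp_pos a).le
  have h2 : exp a * exp (b - a) = exp b := by rw [← exp_add]; ring_nf
  have h3 : exp a ≤ exp B := exp_le_exp.2 ha
  have h4 : exp b ≤ exp a := exp_le_exp.2 hab
  rw [abs_of_nonneg (by linarith), abs_of_nonneg (by linarith)]
  nlinarith [exp_pos a]

lemma clamp_lip {a b B : ℝ} (hb : |b| ≤ B) :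
    |max (min a B) (-B) - b| ≤ |a - b| := by
  rw [abs_le] at hb
  have hbb : b = max (min b B) (-B) := by
    rw [min_eq_left hb.2, max_eq_left hb.1]
  have h1 : |min a B - min b B| ≤ |a - b| := by
    have := abs_min_sub_min_le_max a B b B
    simpa using this
  have h2 : |max (min a B) (-B) - max (min b B) (-B)| ≤ max |min a B - min b B| |(-B) - (-B)| :=
    abs_max_sub_max_le_max _ _ _ _
  simp only [sub_self, abs_zero] at h2
  calc |max (min a B) (-B) - b| = |max (min a B) (-B) - max (min b B) (-B)| := by rw [← hbb]
    _ ≤ max |min a B - min b B| 0 := h2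
    _ ≤ |a - b| := by
        rw [max_eq_left (abs_nonneg _)]
        exact h1

lemma integrable_of_bound [IsFiniteMeasure μ] {f : X → ℝ} (hf : AEStronglyMeasurable f μ)
    (B : ℝ) (hB : ∀ x, |f x| ≤ B) : Integrable f μ :=
  (integrable_const B).mono' hf (Filter.Eventually.of_forall fun x => by
    simpa [Real.norm_eq_abs] using hB x)

lemma eq_top_of_forall_ofReal_le {S : ℝ≥0∞} (h : ∀ M : ℝ, ENNReal.ofReal M ≤ S) : S = ⊤ := by
  by_contra hne
  have h1 := h (S.toReal + 1)
  have h2 : S < ENNReal.ofReal (S.toReal + 1) := by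
    conv_lhs => rw [← ENNReal.ofReal_toReal hne]
    exact (ENNReal.ofReal_lt_ofReal_iff (by positivity)).2 (lt_add_one _)
  exact absurd h1 (not_le.2 h2)

lemma D_le_integral_llr [IsProbabilityMeasure μ] [IsProbabilityMeasure ν]
    (hμν : μ ≪ ν) (hint : Integrable (llr μ ν) μ)
    {f : X → ℝ} (hf : Measurable f) {B : ℝ} (hB : ∀ x, |f x| ≤ B) :
    D μ ν f ≤ ∫ x, llr μ ν x ∂μ := by
  set g : X → ℝ := fun x => (μ.rnDeriv ν x).toReal with hg
  have hgmeas : Measurable g := (Measure.measurable_rnDeriv μ ν).ennreal_toReal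
  have hgint : Integrable g ν := Measure.integrable_toReal_rnDeriv
  have hfμ_int : Integrable f μ := integrable_of_bound hf.aestronglyMeasurable B hB
  have hgf_int : Integrable (fun x => g x * f x) ν := by
    have := (integrable_rnDeriv_smul_iff hμν (f := f)).2 hfμ_int
    simpa [smul_eq_mul] using this
  have hfeq : ∫ x, f x ∂μ = ∫ x, g x * f x ∂ν := by
    have := integral_rnDeriv_smul hμν (f := f)
    simpa [smul_eq_mul] using this.symm
  have hgllr_int : Integrable (fun x => g x * llr μ ν x) ν := by
    have := (integrable_rnDeriv_smul_iff hμν (f := llr μ ν)).2 hint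
    simpa [smul_eq_mul] using this
  have hllr_eq : ∫ x, llr μ ν x ∂μ = ∫ x, g x * llr μ ν x ∂ν := by
    have := integral_rnDeriv_smul hμν (f := llr μ ν)
    simpa [smul_eq_mul] using this.symm
  have hgint1 : ∫ x, g x ∂ν = 1 := by
    rw [hg]
    rw [Measure.integral_toReal_rnDeriv hμν]
    simp
  have hexp_int : Integrable (fun x => exp (f x)) ν :=
    integrable_of_bound (hf.exp.aestronglyMeasurable) (exp B) fun x => by
      rw [abs_of_pos (exp_pos _)]
      exact exp_le_exp.2 ((le_abs_self _).trans (hB x))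
  have hpt : ∀ x, g x * f x - exp (f x) + 1 ≤ g x * llr μ ν x - g x + 1 := by
    intro x
    have h1 := key_ineq (t := g x) (s := f x) ENNReal.toReal_nonneg
    have h2 : llr μ ν x = log (g x) := rfl
    rw [h2]
    nlinarith
  have h1 : Integrable (fun x => g x * f x - exp (f x)) ν := hgf_int.sub hexp_int
  have h2 : Integrable (fun x => g x * llr μ ν x - g x) ν := hgllr_int.sub hgint
  have hL : D μ ν f = ∫ x, (g x * f x - exp (f x) + 1) ∂ν := by
    rw [D, hfeq, integral_add h1 (integrable_const 1),
      integral_sub hgf_int hexp_int]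
    simp
  have hR : ∫ x, (g x * llr μ ν x - g x + 1) ∂ν = ∫ x, llr μ ν x ∂μ := by
    rw [integral_add h2 (integrable_const 1),
      integral_sub hgllr_int hgint, hgint1, hllr_eq]
    simp
  rw [hL, ← hR]
  exact integral_mono (h1.add (integrable_const 1)) (h2.add (integrable_const 1)) hpt

lemma ofReal_D_le_klDiv [IsProbabilityMeasure μ] [IsProbabilityMeasure ν]
    {f : X → ℝ} (hf : Measurable f) {B : ℝ} (hB : ∀ x, |f x| ≤ B) :
    ENNReal.ofReal (D μ ν f) ≤ klDiv μ ν := by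
  rw [klDiv]
  split_ifs with h
  · exact ENNReal.ofReal_le_ofReal (D_le_integral_llr h.1 h.2 hf hB)
  · exact le_top

lemma integrable_neg_llr [IsProbabilityMeasure μ] [IsProbabilityMeasure ν] (hμν : μ ≪ ν) :
    Integrable (fun x => max (-llr μ ν x) 0) μ := by
  have hmeas : Measurable fun x => max (-llr μ ν x) 0 :=
    (measurable_llr μ ν).neg.max measurable_const
  refine ⟨hmeas.aestronglyMeasurable, ?_⟩
  have h0 : (0 : X → ℝ) ≤ᵐ[μ] fun x => max (-llr μ ν x) 0 :=
    Filter.Eventually.of_forall fun x => le_max_right _ _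
  rw [hasFiniteIntegral_iff_ofReal h0]
  have heq : ∫⁻ x, ENNReal.ofReal (max (-llr μ ν x) 0) ∂μ
      = ∫⁻ x, μ.rnDeriv ν x * ENNReal.ofReal (max (-llr μ ν x) 0) ∂ν :=
    (lintegral_rnDeriv_mul (μ := μ) (ν := ν) hμν hmeas.ennreal_ofReal.aemeasurable).symm
  rw [heq]
  have hbound : ∀ x, μ.rnDeriv ν x * ENNReal.ofReal (max (-llr μ ν x) 0) ≤ 1 := by
    intro x
    by_cases hdtop : μ.rnDeriv ν x = ⊤
    · have hz : llr μ ν x = 0 := by simp only [llr, hdtop]; simp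
      rw [hz]; simp
    · set tt := (μ.rnDeriv ν x).toReal with htt
      have hd' : μ.rnDeriv ν x = ENNReal.ofReal tt := (ENNReal.ofReal_toReal hdtop).symm
      have htt0 : 0 ≤ tt := ENNReal.toReal_nonneg
      have hllr : llr μ ν x = log tt := rfl
      rcases le_or_gt 1 tt with h1 | h1
      · have hmax0 : max (-llr μ ν x) 0 = 0 := by
          rw [hllr, max_eq_right (by simpa using log_nonneg h1)]
        rw [hmax0]; simp
      · rcases eq_or_lt_of_le htt0 with h0' | h0'
        · rw [hd', ← h0']; simp
        · have hprod : tt * max (-llr μ ν x) 0 ≤ 1 := by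
            rw [hllr]
            have hlog : log tt⁻¹ ≤ tt⁻¹ - 1 := log_le_sub_one_of_pos (by positivity)
            rw [log_inv] at hlog
            have hmax : max (-log tt) 0 = -log tt :=
              max_eq_left (by nlinarith [log_neg h0' h1])
            rw [hmax]
            have hmul := mul_le_mul_of_nonneg_left hlog htt0
            have h2 : tt * (tt⁻¹ - 1) = 1 - tt := by field_simp
            nlinarith
          calc μ.rnDeriv ν x * ENNReal.ofReal (max (-llr μ ν x) 0)
              = ENNReal.ofReal (tt * max (-llr μ ν x) 0) := by
                rw [hd', ← ENNReal.ofReal_mul htt0]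
            _ ≤ ENNReal.ofReal 1 := ENNReal.ofReal_le_ofReal hprod
            _ = 1 := ENNReal.ofReal_one
  calc ∫⁻ x, μ.rnDeriv ν x * ENNReal.ofReal (max (-llr μ ν x) 0) ∂ν
      ≤ ∫⁻ _, 1 ∂ν := lintegral_mono hbound
    _ = 1 := by simp
    _ < ⊤ := ENNReal.one_lt_top

section Polish

variable [TopologicalSpace X] [PolishSpace X] [BorelSpace X]

omit [MeasurableSpace X] [BorelSpace X] in
lemma normal : NormalSpace X := by
  letI := TopologicalSpace.metrizableSpaceMetric X
  infer_instance

lemma ofReal_D_le_iSup [IsProbabilityMeasure μ] [IsProbabilityMeasure ν]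
    {f : X → ℝ} (hf : Measurable f) {B : ℝ} (hB0 : 0 ≤ B) (hB : ∀ x, |f x| ≤ B) :
    ENNReal.ofReal (D μ ν f) ≤ ⨆ g : BoundedContinuousFunction X ℝ, ENNReal.ofReal (D μ ν g) := by
  haveI : NormalSpace X := normal
  refine ENNReal.le_of_forall_pos_le_add fun ε hε _ => ?_
  have hεR : (0:ℝ) < ε := hε
  have hden : (0:ℝ) < 1 + exp B := by positivity
  set ε' : ℝ := ε / (1 + exp B) with hε'def
  have hε'pos : 0 < ε' := div_pos hεR hden
  have hfint : Integrable f (μ + ν) := integrable_of_bound hf.aestronglyMeasurable B hB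
  obtain ⟨g₀, hg₀, hg₀int⟩ := hfint.exists_boundedContinuous_integral_sub_le hε'pos
  let g : BoundedContinuousFunction X ℝ :=
    BoundedContinuousFunction.mkOfBound
      ⟨fun x => max (min (g₀ x) B) (-B),
        (g₀.continuous.min continuous_const).max continuous_const⟩
      (2 * B) (fun x y => by
        simp only [ContinuousMap.coe_mk]
        rw [Real.dist_eq]
        have h1 : ∀ z : X, |max (min (g₀ z) B) (-B)| ≤ B := fun z => by
          rw [abs_le]; constructor
          · exact le_max_right _ _
          · exact max_le (min_le_right _ _) (by linarith)
        have hx := (abs_le.1 (h1 x)); have hy := (abs_le.1 (h1 y))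
        rw [abs_le]; constructor <;> [linarith [hx.1, hy.2]; linarith [hx.2, hy.1]])
  have hgval : ∀ x, g x = max (min (g₀ x) B) (-B) := fun x => rfl
  have hgB : ∀ x, |g x| ≤ B := fun x => by
    rw [hgval, abs_le]; constructor
    · exact le_max_right _ _
    · exact max_le (min_le_right _ _) (by linarith)
  have hgmeas : Measurable (g : X → ℝ) := g.continuous.measurable
  have hclamp : ∀ x, |f x - g x| ≤ |f x - g₀ x| := fun x => by
    rw [abs_sub_comm, hgval, abs_sub_comm (f x) (g₀ x)]
    exact clamp_lip (hB x)
  have hdiffint : Integrable (fun x => |f x - g x|) (μ + ν) :=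
    integrable_of_bound ((hf.sub hgmeas).abs.aestronglyMeasurable) (2 * B) fun x => by
      have := hB x; have := hgB x
      rw [abs_abs]
      calc |f x - g x| ≤ |f x| + |g x| := abs_sub _ _
        _ ≤ 2 * B := by linarith
  have hkey : ∫ x, |f x - g x| ∂(μ + ν) ≤ ε' := by
    refine le_trans (le_trans (integral_mono hdiffint ((hfint.sub hg₀int).abs) hclamp) ?_) hg₀
    simp [Real.norm_eq_abs]
  have hsplitint := (integrable_add_measure.1 hdiffint)
  have hsum : ∫ x, |f x - g x| ∂μ + ∫ x, |f x - g x| ∂ν = ∫ x, |f x - g x| ∂(μ + ν) :=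
    (integral_add_measure hsplitint.1 hsplitint.2).symm
  have hμle : ∫ x, |f x - g x| ∂μ ≤ ε' := by
    have h2 : 0 ≤ ∫ x, |f x - g x| ∂ν := integral_nonneg fun x => abs_nonneg _
    linarith [hkey, hsum]
  have hνle : ∫ x, |f x - g x| ∂ν ≤ ε' := by
    have h2 : 0 ≤ ∫ x, |f x - g x| ∂μ := integral_nonneg fun x => abs_nonneg _
    linarith [hkey, hsum]
  have hfμ : Integrable f μ := (integrable_add_measure.1 hfint).1
  have hgμ : Integrable (g : X → ℝ) μ := integrable_of_bound hgmeas.aestronglyMeasurable B hgB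
  have h1 : |∫ x, f x ∂μ - ∫ x, g x ∂μ| ≤ ε' := by
    rw [← integral_sub hfμ hgμ]
    refine le_trans ?_ hμle
    have := norm_integral_le_integral_norm (μ := μ) (f := fun x => f x - g x)
    simpa [Real.norm_eq_abs] using this
  have hexpfint : Integrable (fun x => exp (f x)) ν :=
    integrable_of_bound hf.exp.aestronglyMeasurable (exp B) fun x => by
      rw [abs_of_pos (exp_pos _)]
      exact exp_le_exp.2 ((le_abs_self _).trans (hB x))
  have hexpgint : Integrable (fun x => exp (g x)) ν :=
    integrable_of_bound hgmeas.exp.aestronglyMeasurable (exp B) fun x => by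
      rw [abs_of_pos (exp_pos _)]
      exact exp_le_exp.2 ((le_abs_self _).trans (hgB x))
  have h2 : |∫ x, exp (f x) ∂ν - ∫ x, exp (g x) ∂ν| ≤ exp B * ε' := by
    rw [← integral_sub hexpfint hexpgint]
    have hptwise : ∀ x, |exp (f x) - exp (g x)| ≤ exp B * |f x - g x| := fun x =>
      exp_lip ((le_abs_self _).trans (hB x)) ((le_abs_self _).trans (hgB x))
    have habs : |∫ x, (exp (f x) - exp (g x)) ∂ν| ≤ ∫ x, |exp (f x) - exp (g x)| ∂ν := by
      have := norm_integral_le_integral_norm (μ := ν) (f := fun x => exp (f x) - exp (g x))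
      simpa [Real.norm_eq_abs] using this
    refine habs.trans ?_
    have hi1 : Integrable (fun x => |exp (f x) - exp (g x)|) ν := (hexpfint.sub hexpgint).abs
    have hi2 : Integrable (fun x => exp B * |f x - g x|) ν :=
      ((integrable_add_measure.1 hdiffint).2).const_mul _
    calc ∫ x, |exp (f x) - exp (g x)| ∂ν ≤ ∫ x, exp B * |f x - g x| ∂ν :=
          integral_mono hi1 hi2 hptwise
      _ = exp B * ∫ x, |f x - g x| ∂ν := integral_const_mul _ _
      _ ≤ exp B * ε' := by nlinarith [exp_pos B, hνle]
  have hD : D μ ν f ≤ D μ ν g + ε := by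
    have hεeq : ε' * (1 + exp B) = ε := by
      rw [hε'def]; field_simp
    have ha := abs_le.1 h1
    have hb := abs_le.1 h2
    rw [D, D]
    nlinarith [ha.1, ha.2, hb.1, hb.2]
  calc ENNReal.ofReal (D μ ν f) ≤ ENNReal.ofReal (D μ ν g + ε) := ENNReal.ofReal_le_ofReal hD
    _ ≤ ENNReal.ofReal (D μ ν g) + ENNReal.ofReal ε := ENNReal.ofReal_add_le
    _ ≤ (⨆ g : BoundedContinuousFunction X ℝ, ENNReal.ofReal (D μ ν g)) + ε := by
        gcongr
        · exact le_iSup (fun g : BoundedContinuousFunction X ℝ => ENNReal.ofReal (D μ ν g)) g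
        · simp

set_option linter.unusedSectionVars false in
lemma iSup_D_eq_top_of_not_ac [IsProbabilityMeasure μ] [IsProbabilityMeasure ν]
    (h : ¬ μ ≪ ν) :
    (⨆ g : BoundedContinuousFunction X ℝ, ENNReal.ofReal (D μ ν g)) = ⊤ := by
  haveI : NormalSpace X := normal
  refine eq_top_of_forall_ofReal_le fun M => ?_
  have h' : ∃ s, ν s = 0 ∧ μ s ≠ 0 := by
    by_contra hc
    push_neg at hc
    exact h (Measure.AbsolutelyContinuous.mk fun s _ h0 => hc s h0)
  obtain ⟨s, hνs, hμs⟩ := h'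
  set t := toMeasurable ν s with ht
  have hνt : ν t = 0 := by rwa [measure_toMeasurable]
  have hμt : μ t ≠ 0 := fun h0 => hμs (measure_mono_null (subset_toMeasurable ν s) h0)
  have htm : MeasurableSet t := measurableSet_toMeasurable ν s
  have hfin : μ t ≠ ⊤ := measure_ne_top μ t
  have hhalf : μ t / 2 ≠ 0 := by
    simp only [ne_eq, ENNReal.div_eq_zero_iff, hμt, false_or]
    exact ENNReal.ofNat_ne_top
  obtain ⟨K, hKt, hKcl, hKlt⟩ := htm.exists_isClosed_lt_add hfin hhalf
  have hμK : μ t / 2 ≤ μ K := by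
    by_contra hc
    push_neg at hc
    have h1 : μ t < μ t := by
      calc μ t < μ K + μ t / 2 := hKlt
        _ ≤ μ t / 2 + μ t / 2 := add_le_add hc.le le_rfl
        _ = μ t := ENNReal.add_halves _
    exact absurd h1 (lt_irrefl _)
  set τ := (μ t / 2).toReal with hτdef
  have hτpos : 0 < τ := ENNReal.toReal_pos hhalf
    (ne_top_of_le_ne_top hfin ENNReal.half_le_self)
  have hKτ : τ ≤ (μ K).toReal := by
    refine ENNReal.toReal_le_toReal ?_ (measure_ne_top μ K) |>.2 hμK
    exact ne_top_of_le_ne_top hfin ENNReal.half_le_self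
  set c := max ((M + 1) / τ) 0 with hcdef
  have hc0 : 0 ≤ c := le_max_right _ _
  have hνK : ν K = 0 := measure_mono_null hKt hνt
  obtain ⟨U, hKU, hUopen, hUsmall⟩ := Set.exists_isOpen_lt_of_lt K (ENNReal.ofReal (exp (-c)))
    (by rw [hνK]; exact ENNReal.ofReal_pos.2 (exp_pos _))
  have hdisj : Disjoint Uᶜ K := Set.disjoint_left.2 fun x hx hxK => hx (hKU hxK)
  obtain ⟨φ, hφ0, hφ1, hφ01⟩ := exists_continuous_zero_one_of_isClosed
    hUopen.isClosed_compl hKcl hdisj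
  have hφb : ∀ z, φ z ∈ Set.Icc (0:ℝ) 1 := hφ01
  let F : BoundedContinuousFunction X ℝ := BoundedContinuousFunction.mkOfBound
    ⟨fun x => c * φ x, continuous_const.mul φ.continuous⟩ c (fun x y => by
      simp only [ContinuousMap.coe_mk]
      rw [Real.dist_eq, abs_le]
      have hx := hφb x; have hy := hφb y
      constructor <;> nlinarith [hx.1, hx.2, hy.1, hy.2])
  have hFval : ∀ x, F x = c * φ x := fun x => rfl
  have hFb : ∀ x, |F x| ≤ c := fun x => by
    rw [hFval, abs_le]
    have hx := hφb x
    constructor <;> nlinarith [hx.1, hx.2]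
  have hFmeas : Measurable (F : X → ℝ) := F.continuous.measurable
  have hFint : Integrable (F : X → ℝ) μ := integrable_of_bound hFmeas.aestronglyMeasurable c hFb
  have hμint : ∫ x, Set.indicator K (fun _ => c) x ∂μ ≤ ∫ x, F x ∂μ := by
    refine integral_mono ((integrable_const c).indicator hKcl.measurableSet) hFint fun x => ?_
    by_cases hx : x ∈ K
    · rw [Set.indicator_of_mem hx, hFval, hφ1 hx]
      simp
    · rw [Set.indicator_of_notMem hx, hFval]
      exact mul_nonneg hc0 (hφb x).1
  have hμlow : c * (μ K).toReal ≤ ∫ x, F x ∂μ := by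
    rw [integral_indicator_const c hKcl.measurableSet, smul_eq_mul, mul_comm] at hμint
    exact hμint
  have hexp_high : ∫ x, exp (F x) ∂ν ≤ 2 := by
    have hpt : ∀ x, exp (F x) ≤ 1 + Set.indicator U (fun _ => exp c) x := by
      intro x
      by_cases hx : x ∈ U
      · rw [Set.indicator_of_mem hx]
        have hlt : F x ≤ c := by
          rw [hFval]; nlinarith [(hφb x).2, (hφb x).1]
        have := exp_le_exp.2 hlt
        linarith
      · rw [Set.indicator_of_notMem hx]
        have hx' : x ∈ Uᶜ := hx
        have hz : φ x = 0 := hφ0 hx'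
        rw [hFval, hz, mul_zero, exp_zero]
        norm_num
    have hint1 : Integrable (fun x => exp (F x)) ν :=
      integrable_of_bound (hFmeas.exp.aestronglyMeasurable) (exp c) fun x => by
        rw [abs_of_pos (exp_pos _)]
        exact exp_le_exp.2 ((le_abs_self _).trans (hFb x))
    have hindint : Integrable (Set.indicator U fun _ => exp c) ν :=
      (integrable_const _).indicator hUopen.measurableSet
    have hint2 : Integrable (fun x => 1 + Set.indicator U (fun _ => exp c) x) ν :=
      (integrable_const 1).add hindint
    have hνU : (ν U).toReal ≤ exp (-c) :=
      ENNReal.toReal_le_of_le_ofReal (exp_pos _).le hUsmall.le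
    calc ∫ x, exp (F x) ∂ν ≤ ∫ x, (1 + Set.indicator U (fun _ => exp c) x) ∂ν :=
          integral_mono hint1 hint2 hpt
      _ = 1 + (ν U).toReal * exp c := by
          rw [integral_add (integrable_const 1) hindint, integral_const,
            integral_indicator_const _ hUopen.measurableSet, smul_eq_mul, smul_eq_mul]
          simp [measure_univ, Measure.real]
      _ ≤ 1 + exp (-c) * exp c := by nlinarith [exp_pos c, hνU]
      _ = 2 := by rw [← exp_add]; norm_num
  have hMle : M ≤ D μ ν F := by
    have h1 : M + 1 ≤ c * τ := by
      rcases le_or_gt (M + 1) 0 with hm | hm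
      · nlinarith [mul_nonneg hc0 hτpos.le]
      · have hle : (M + 1) / τ ≤ c := le_max_left _ _
        calc M + 1 = ((M + 1) / τ) * τ := by field_simp
          _ ≤ c * τ := by nlinarith
    have h2 : c * τ ≤ c * (μ K).toReal := mul_le_mul_of_nonneg_left hKτ hc0
    rw [D]
    linarith [hμlow, hexp_high]
  calc ENNReal.ofReal M ≤ ENNReal.ofReal (D μ ν F) := ENNReal.ofReal_le_ofReal hMle
    _ ≤ ⨆ g : BoundedContinuousFunction X ℝ, ENNReal.ofReal (D μ ν g) :=
        le_iSup (fun g : BoundedContinuousFunction X ℝ => ENNReal.ofReal (D μ ν g)) F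

lemma klDiv_le_iSup [IsProbabilityMeasure μ] [IsProbabilityMeasure ν] :
    klDiv μ ν ≤ ⨆ g : BoundedContinuousFunction X ℝ, ENNReal.ofReal (D μ ν g) := by
  by_cases hac : μ ≪ ν
  swap
  · rw [iSup_D_eq_top_of_not_ac hac]; exact le_top
  set G : X → ℝ := fun x => (μ.rnDeriv ν x).toReal with hG
  have hGmeas : Measurable G := (Measure.measurable_rnDeriv μ ν).ennreal_toReal
  have hGint : Integrable G ν := Measure.integrable_toReal_rnDeriv
  have hG1 : ∫ x, G x ∂ν = 1 := by rw [hG, Measure.integral_toReal_rnDeriv hac]; simp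
  set f : ℕ → X → ℝ :=
    fun k x => if G x = 0 then -(k:ℝ) else max (min (llr μ ν x) k) (-(k:ℝ)) with hf
  have hfmeas : ∀ k, Measurable (f k) := fun k =>
    Measurable.ite (hGmeas (measurableSet_singleton 0)) measurable_const
      (((measurable_llr μ ν).min measurable_const).max measurable_const)
  have hfbd : ∀ (k : ℕ) x, |f k x| ≤ (k : ℝ) := by
    intro k x
    by_cases hx : G x = 0
    · simp only [hf, if_pos hx]
      simp
    · simp only [hf, if_neg hx]
      rw [abs_le]
      refine ⟨le_max_right _ _, max_le (min_le_right _ _) ?_⟩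
      simpa using Nat.cast_nonneg (α := ℝ) k
  have hexpint : ∀ k : ℕ, Integrable (fun x => exp (f k x)) ν := fun k =>
    integrable_of_bound ((hfmeas k).exp.aestronglyMeasurable) (exp k) fun x => by
      rw [abs_of_pos (exp_pos _)]
      exact exp_le_exp.2 ((le_abs_self _).trans (hfbd k x))
  have hexpbound : ∀ k : ℕ, ∫ x, exp (f k x) ∂ν ≤ 1 + exp (-(k:ℝ)) := by
    intro k
    have hpt : ∀ x, exp (f k x) ≤ G x + exp (-(k:ℝ)) := by
      intro x
      by_cases hx : G x = 0
      · simp only [hf, if_pos hx, hx]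
        simp
      · have hxpos : 0 < G x := lt_of_le_of_ne ENNReal.toReal_nonneg (Ne.symm hx)
        simp only [hf, if_neg hx]
        have hllr : llr μ ν x = log (G x) := rfl
        rw [hllr, Real.exp_monotone.map_max, Real.exp_monotone.map_min, exp_log hxpos]
        refine max_le ?_ ?_
        · exact (min_le_left _ _).trans (le_add_of_nonneg_right (exp_pos _).le)
        · exact le_add_of_nonneg_left hxpos.le
    calc ∫ x, exp (f k x) ∂ν ≤ ∫ x, (G x + exp (-(k:ℝ))) ∂ν :=
          integral_mono (hexpint k) (hGint.add (integrable_const _)) hpt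
      _ = 1 + exp (-(k:ℝ)) := by
          rw [integral_add hGint (integrable_const _), hG1, integral_const]
          simp [measure_univ]
  have haeG : ∀ᵐ x ∂μ, G x ≠ 0 := by
    filter_upwards [Measure.rnDeriv_pos hac, hac.ae_le (Measure.rnDeriv_lt_top μ ν)]
      with x h1 h2
    exact (ENNReal.toReal_pos h1.ne' h2.ne).ne'
  by_cases hint : Integrable (llr μ ν) μ
  · rw [klDiv, if_pos ⟨hac, hint⟩]
    refine ENNReal.le_of_forall_pos_le_add fun ε hε _ => ?_
    have hεR : (0:ℝ) < ε := hε
    have hconv : Tendsto (fun k : ℕ => ∫ x, f k x ∂μ) atTop (nhds (∫ x, llr μ ν x ∂μ)) := by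
      refine tendsto_integral_of_dominated_convergence (fun x => |llr μ ν x|)
        (fun k => (hfmeas k).aestronglyMeasurable) hint.abs ?_ ?_
      · intro k
        filter_upwards [haeG] with x hx
        simp only [hf, if_neg hx, Real.norm_eq_abs]
        have := clamp_lip (a := llr μ ν x) (b := 0) (B := (k:ℝ))
          (by simpa using Nat.cast_nonneg (α := ℝ) k)
        simpa using this
      · filter_upwards [haeG] with x hx
        obtain ⟨k₀, hk₀⟩ := exists_nat_ge |llr μ ν x|
        refine Tendsto.congr' ?_ (tendsto_const_nhds (x := llr μ ν x))
        filter_upwards [eventually_ge_atTop k₀] with k hk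
        have hkb : |llr μ ν x| ≤ (k:ℝ) := hk₀.trans (by exact_mod_cast hk)
        rw [abs_le] at hkb
        simp only [hf, if_neg hx]
        rw [min_eq_left hkb.2, max_eq_left hkb.1]
    have hexpconv : Tendsto (fun k : ℕ => exp (-(k:ℝ))) atTop (nhds 0) :=
      Real.tendsto_exp_neg_atTop_nhds_zero.comp tendsto_natCast_atTop_atTop
    have h1 : ∀ᶠ k : ℕ in atTop, ∫ x, llr μ ν x ∂μ - (ε:ℝ)/2 < ∫ x, f k x ∂μ :=
      hconv.eventually (eventually_gt_nhds (by linarith))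
    have h2 : ∀ᶠ k : ℕ in atTop, exp (-(k:ℝ)) < (ε:ℝ)/2 :=
      hexpconv.eventually (eventually_lt_nhds (by linarith))
    obtain ⟨k, hk1, hk2⟩ := (h1.and h2).exists
    have hD : ∫ x, llr μ ν x ∂μ - ε ≤ D μ ν (f k) := by
      rw [D]
      have := hexpbound k
      linarith
    have happrox := ofReal_D_le_iSup (μ := μ) (ν := ν) (hfmeas k) (B := (k:ℝ))
      (Nat.cast_nonneg k) (hfbd k)
    calc ENNReal.ofReal (∫ x, llr μ ν x ∂μ) ≤ ENNReal.ofReal (D μ ν (f k) + ε) :=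
          ENNReal.ofReal_le_ofReal (by linarith)
      _ ≤ ENNReal.ofReal (D μ ν (f k)) + ENNReal.ofReal ε := ENNReal.ofReal_add_le
      _ ≤ (⨆ g : BoundedContinuousFunction X ℝ, ENNReal.ofReal (D μ ν g)) + ε :=
          add_le_add happrox (le_of_eq ENNReal.ofReal_coe_nnreal)
  · rw [klDiv, if_neg (fun hcon => hint hcon.2)]
    refine (eq_top_of_forall_ofReal_le fun M => ?_).ge
    set N : X → ℝ := fun x => max (-llr μ ν x) 0 with hN
    set P : X → ℝ := fun x => max (llr μ ν x) 0 with hP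
    have hNint : Integrable N μ := integrable_neg_llr hac
    have hPmeas : Measurable P := (measurable_llr μ ν).max measurable_const
    have hP0 : ∀ x, 0 ≤ P x := fun x => le_max_right _ _
    have hPN : ∀ x, llr μ ν x = P x - N x := fun x =>
      (max_zero_sub_max_neg_zero_eq_self (llr μ ν x)).symm
    have hPnot : ¬ Integrable P μ := by
      intro hc
      refine hint ?_
      have : llr μ ν = fun x => P x - N x := funext hPN
      rw [this]
      exact hc.sub hNint
    have hPlint : ∫⁻ x, ENNReal.ofReal (P x) ∂μ = ⊤ := by
      by_contra hne
      refine hPnot ⟨hPmeas.aestronglyMeasurable, ?_⟩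
      rw [hasFiniteIntegral_iff_ofReal (Filter.Eventually.of_forall hP0)]
      exact lt_top_iff_ne_top.2 hne
    have hsup : (⨆ k : ℕ, ∫⁻ x, ENNReal.ofReal (min (P x) k) ∂μ) = ⊤ := by
      rw [← lintegral_iSup (fun k => (hPmeas.min measurable_const).ennreal_ofReal)
        (fun k k' hkk x => ENNReal.ofReal_le_ofReal
          (min_le_min le_rfl (by exact_mod_cast hkk)))]
      have heq : ∀ x, (⨆ k : ℕ, ENNReal.ofReal (min (P x) k)) = ENNReal.ofReal (P x) := by
        intro x
        apply le_antisymm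
        · exact iSup_le fun k => ENNReal.ofReal_le_ofReal (min_le_left _ _)
        · obtain ⟨k, hk⟩ := exists_nat_ge (P x)
          have : ENNReal.ofReal (P x) = ENNReal.ofReal (min (P x) k) := by
            rw [min_eq_left hk]
          rw [this]
          exact le_iSup (fun k : ℕ => ENNReal.ofReal (min (P x) (k:ℝ))) k
      simp_rw [heq]
      exact hPlint
    set CN := ∫ x, N x ∂μ with hCN
    have hbig : ∃ k : ℕ, ENNReal.ofReal (M + CN + 1) < ∫⁻ x, ENNReal.ofReal (min (P x) k) ∂μ := by
      rw [← lt_iSup_iff, hsup]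
      exact ENNReal.ofReal_lt_top
    obtain ⟨k, hk⟩ := hbig
    have hminmeas : Measurable fun x => min (P x) (k:ℝ) := hPmeas.min measurable_const
    have hminbd : ∀ x, |min (P x) (k:ℝ)| ≤ (k:ℝ) := fun x => by
      rw [abs_le]
      have hk0 : (0:ℝ) ≤ k := Nat.cast_nonneg k
      have hm0 : (0:ℝ) ≤ min (P x) (k:ℝ) := le_min (hP0 x) hk0
      exact ⟨by linarith, min_le_right _ _⟩
    have hminint : Integrable (fun x => min (P x) (k:ℝ)) μ :=
      integrable_of_bound hminmeas.aestronglyMeasurable k hminbd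
    have hlintne : ∫⁻ x, ENNReal.ofReal (min (P x) k) ∂μ ≠ ⊤ := by
      refine ne_top_of_le_ne_top (b := ENNReal.ofReal k) ?_ ?_
      · exact ENNReal.ofReal_ne_top
      · calc ∫⁻ x, ENNReal.ofReal (min (P x) k) ∂μ
            ≤ ∫⁻ _, ENNReal.ofReal k ∂μ :=
              lintegral_mono fun x => ENNReal.ofReal_le_ofReal (min_le_right _ _)
          _ = ENNReal.ofReal k := by simp [measure_univ]
    have hmineq : ∫ x, min (P x) (k:ℝ) ∂μ = (∫⁻ x, ENNReal.ofReal (min (P x) k) ∂μ).toReal :=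
      integral_eq_lintegral_of_nonneg_ae
        (Filter.Eventually.of_forall fun x => le_min (hP0 x) (Nat.cast_nonneg k))
        hminmeas.aestronglyMeasurable
    have hMbound : M + CN + 1 ≤ ∫ x, min (P x) (k:ℝ) ∂μ := by
      rcases le_or_gt (M + CN + 1) 0 with hm | hm
      · exact hm.trans (integral_nonneg fun x => le_min (hP0 x) (Nat.cast_nonneg k))
      · rw [hmineq]
        have h5 := (ENNReal.toReal_le_toReal ENNReal.ofReal_ne_top hlintne).2 hk.le
        rwa [ENNReal.toReal_ofReal hm.le] at h5
    have hfge : ∀ᵐ x ∂μ, min (P x) (k:ℝ) - N x ≤ f k x := by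
      filter_upwards [haeG] with x hx
      simp only [hf, if_neg hx]
      rcases le_or_gt 0 (llr μ ν x) with hL | hL
      · have hPx : P x = llr μ ν x := max_eq_left hL
        have hNx : N x = 0 := max_eq_right (neg_nonpos.2 hL)
        rw [hPx, hNx, sub_zero]
        exact le_max_left _ _
      · have hPx : P x = 0 := max_eq_right hL.le
        have hNx : N x = -llr μ ν x := max_eq_left (by linarith)
        have hmin0 : min (0:ℝ) (k:ℝ) = 0 := min_eq_left (Nat.cast_nonneg k)
        rw [hPx, hNx, hmin0, zero_sub, neg_neg]
        have hminL : min (llr μ ν x) (k:ℝ) = llr μ ν x :=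
          min_eq_left (hL.le.trans (Nat.cast_nonneg k))
        rw [hminL]
        exact le_max_left _ _
    have hfint' : Integrable (f k) μ :=
      integrable_of_bound (hfmeas k).aestronglyMeasurable k (hfbd k)
    have hintlow : ∫ x, (min (P x) (k:ℝ) - N x) ∂μ ≤ ∫ x, f k x ∂μ :=
      integral_mono_ae (hminint.sub hNint) hfint' hfge
    have hsplit : ∫ x, (min (P x) (k:ℝ) - N x) ∂μ = ∫ x, min (P x) (k:ℝ) ∂μ - CN :=
      integral_sub hminint hNint
    have hDF : M ≤ D μ ν (f k) := by
      rw [D]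
      have h6 := hexpbound k
      have h7 : exp (-(k:ℝ)) ≤ 1 := by
        calc exp (-(k:ℝ)) ≤ exp 0 := exp_le_exp.2 (by simpa using Nat.cast_nonneg (α := ℝ) k)
          _ = 1 := exp_zero
      have h8 : M + CN + 1 - CN ≤ ∫ x, f k x ∂μ := by
        rw [hsplit] at hintlow
        linarith
      linarith
    have happrox := ofReal_D_le_iSup (μ := μ) (ν := ν) (hfmeas k) (B := (k:ℝ))
      (Nat.cast_nonneg k) (hfbd k)
    exact le_trans (ENNReal.ofReal_le_ofReal hDF) happrox

end Polish

end KLProof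

/-- **Lower semicontinuity of the KL divergence in its second argument** with respect to
weak convergence of probability measures on a Polish space: if `ν n → ν` weakly then
`KL(μ ‖ ν) ≤ liminf_n KL(μ ‖ ν n)`. -/
theorem klDiv_le_liminf_of_tendsto_weakly
    {X : Type*} [TopologicalSpace X] [PolishSpace X] [MeasurableSpace X] [BorelSpace X]
    (μ : Measure X) [IsProbabilityMeasure μ]
    (ν : ℕ → Measure X) [∀ n, IsProbabilityMeasure (ν n)]
    (νlim : Measure X) [IsProbabilityMeasure νlim]
    (hweak : ∀ f : BoundedContinuousFunction X ℝ,
      Tendsto (fun n => ∫ x, f x ∂(ν n)) atTop (nhds (∫ x, f x ∂νlim))) :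
    klDiv μ νlim ≤ liminf (fun n => klDiv μ (ν n)) atTop := by
  refine le_trans (KLProof.klDiv_le_iSup (μ := μ) (ν := νlim)) (iSup_le fun g => ?_)
  -- the exponential of g as a bounded continuous function
  set E : BoundedContinuousFunction X ℝ := BoundedContinuousFunction.mkOfBound
    ⟨fun x => Real.exp (g x), Real.continuous_exp.comp g.continuous⟩ (2 * Real.exp ‖g‖)
    (fun x y => by
      simp only [ContinuousMap.coe_mk]
      have hgx : |g x| ≤ ‖g‖ := by simpa [Real.norm_eq_abs] using g.norm_coe_le_norm x
      have hgy : |g y| ≤ ‖g‖ := by simpa [Real.norm_eq_abs] using g.norm_coe_le_norm y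
      have h1 : Real.exp (g x) ≤ Real.exp ‖g‖ :=
        Real.exp_le_exp.2 ((le_abs_self _).trans hgx)
      have h2 : Real.exp (g y) ≤ Real.exp ‖g‖ :=
        Real.exp_le_exp.2 ((le_abs_self _).trans hgy)
      rw [Real.dist_eq, abs_le]
      constructor <;> nlinarith [Real.exp_pos (g x), Real.exp_pos (g y)]) with hE
  have hEval : ∀ x, E x = Real.exp (g x) := fun x => rfl
  have hDconv : Tendsto (fun n => KLProof.D μ (ν n) g) atTop (nhds (KLProof.D μ νlim g)) := by
    have h1 := hweak E
    simp only [KLProof.D]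
    have h2 : ∀ (ρ : Measure X), ∫ x, E x ∂ρ = ∫ x, Real.exp (g x) ∂ρ := fun ρ => rfl
    have h3 : Tendsto (fun n => ∫ x, Real.exp (g x) ∂(ν n)) atTop
        (nhds (∫ x, Real.exp (g x) ∂νlim)) := by
      simpa [h2] using h1
    exact ((tendsto_const_nhds.sub h3).add tendsto_const_nhds)
  have hofReal : Tendsto (fun n => ENNReal.ofReal (KLProof.D μ (ν n) g)) atTop
      (nhds (ENNReal.ofReal (KLProof.D μ νlim g))) :=
    (ENNReal.continuous_ofReal.tendsto _).comp hDconv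
  rw [← hofReal.liminf_eq]
  refine liminf_le_liminf (Filter.Eventually.of_forall fun n => ?_)
  exact KLProof.ofReal_D_le_klDiv (μ := μ) (ν := ν n) g.continuous.measurable
    (B := ‖g‖) (fun x => by simpa [Real.norm_eq_abs] using g.norm_coe_le_norm x)
end
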